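/- arXiv:2605.20553 — 5 statements merged into one kernel-verified Lean document; each statement's English description precedes it below -/
import Mathlib

section
/- Fix an integer N ≥ 1, a real p ≥ 1, reals β₀, β₁, λ₁, and λ : Fin N → ℝ with λ_k ≥ λ₁ for all k, and assume (p−1)·β₁² < 2(λ₁ − β₀). Let (Ω, F, P) be a probability space, t > 0, W : Ω → ℝ a random variable whose law is gaussianReal 0 t, and Y₀ : Ω → ℝ^N a random variable independent of W with E(‖Y₀‖^p) < ∞, where ‖·‖ is the Euclidean norm. Define Y : Ω → ℝ^N componentwise by Y(ω)(k) = exp(−(λ_k − β₀)·t + β₁·W(ω) − β₁²·t/2)·Y₀(ω)(k). Then E(‖Y‖^p) ≤ e^{−μ_p·t}·E(‖Y₀‖^p), where μ_p := p(λ₁ − β₀) − (p(p−1)/2)·β₁² > 0. -/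
open Real MeasureTheory ProbabilityTheory
open scoped NNReal ENNReal

lemma pdf_shift (s : ℝ) {v : ℝ≥0} (hv : v ≠ 0) (x : ℝ) :
    Real.exp (s*x) * gaussianPDFReal 0 v x
      = Real.exp (s^2*v/2) * gaussianPDFReal (s*v) v x := by
  have hv0 : (0:ℝ) < v := by have := hv; exact_mod_cast pos_iff_ne_zero.mpr hv
  simp only [gaussianPDFReal]
  rw [mul_left_comm, mul_left_comm (Real.exp _), ← Real.exp_add, ← Real.exp_add]
  congr 2
  field_simp
  ring

lemma gauss_density (v : ℝ≥0) :
    gaussianPDF 0 v = fun x => ((gaussianPDFReal 0 v x).toNNReal : ℝ≥0∞) := by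
  funext x
  simp [gaussianPDF, ENNReal.ofReal]

lemma mgf_gauss (s : ℝ) {v : ℝ≥0} (hv : v ≠ 0) :
    Integrable (fun x => Real.exp (s*x)) (gaussianReal 0 v) ∧
    ∫ x, Real.exp (s*x) ∂(gaussianReal 0 v) = Real.exp (s^2*v/2) := by
  have hmeas : Measurable fun x : ℝ => (gaussianPDFReal 0 v x).toNNReal :=
    (measurable_gaussianPDFReal 0 v).real_toNNReal
  rw [gaussianReal_of_var_ne_zero 0 hv, gauss_density]
  have key : ∀ x : ℝ, ((gaussianPDFReal 0 v x).toNNReal : ℝ) • Real.exp (s*x)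
      = Real.exp (s^2*v/2) * gaussianPDFReal (s*v) v x := by
    intro x
    rw [smul_eq_mul, Real.coe_toNNReal _ (gaussianPDFReal_nonneg 0 v x), mul_comm]
    exact pdf_shift s hv x
  constructor
  · rw [integrable_withDensity_iff_integrable_smul hmeas]
    refine (Integrable.const_mul (integrable_gaussianPDFReal (s*v) v)
      (Real.exp (s^2*v/2))).congr ?_
    exact Filter.Eventually.of_forall fun x => (key x).symm
  · rw [integral_withDensity_eq_integral_smul hmeas]
    simp only [NNReal.smul_def]
    simp_rw [key]
    rw [integral_const_mul, integral_gaussianPDFReal_eq_one _ hv, mul_one]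

/-- Spectral (Galerkin) form of the `p`-th moment exponential stability theorem:
for the explicit solution at time `t` of the spectral system
`dY_k = -(λ_k - β₀) Y_k dt + β₁ Y_k dW(t)`, under `(p-1) β₁² < 2 (λ₁ - β₀)`
the `p`-th moment decays at rate `μ_p = p (λ₁ - β₀) - (p (p-1)/2) β₁² > 0`. -/
theorem galerkin_pth_moment_exponential_stability
    {Ω : Type*} [MeasurableSpace Ω] (P : Measure Ω) [IsProbabilityMeasure P]
    (N : ℕ) (hN : 1 ≤ N) (p β₀ β₁ lam1 : ℝ) (hp : 1 ≤ p)
    (lam : Fin N → ℝ) (hlam : ∀ k, lam1 ≤ lam k)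
    (hcond : (p - 1) * β₁ ^ 2 < 2 * (lam1 - β₀))
    (t : ℝ) (ht : 0 < t)
    (W : Ω → ℝ) (hWmeas : Measurable W)
    (hWlaw : Measure.map W P = gaussianReal 0 ⟨t, ht.le⟩)
    (Y₀ : Ω → EuclideanSpace ℝ (Fin N)) (hY₀meas : Measurable Y₀)
    (hindep : IndepFun Y₀ W P)
    (hY₀int : Integrable (fun ω => ‖Y₀ ω‖ ^ p) P)
    (Y : Ω → EuclideanSpace ℝ (Fin N))
    (hY : ∀ ω k, Y ω k =
      Real.exp (-(lam k - β₀) * t + β₁ * W ω - β₁ ^ 2 * t / 2) * Y₀ ω k)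
    : 0 < p * (lam1 - β₀) - p * (p - 1) / 2 * β₁ ^ 2 ∧
      ∫ ω, ‖Y ω‖ ^ p ∂P ≤
        Real.exp (-(p * (lam1 - β₀) - p * (p - 1) / 2 * β₁ ^ 2) * t) *
          ∫ ω, ‖Y₀ ω‖ ^ p ∂P := by
  have hp0 : (0:ℝ) < p := lt_of_lt_of_le one_pos hp
  have hμpos : 0 < p * (lam1 - β₀) - p * (p - 1) / 2 * β₁ ^ 2 := by nlinarith
  refine ⟨hμpos, ?_⟩
  set s : ℝ := p * β₁ with hs
  set K : ℝ := p * (-(lam1 - β₀) * t - β₁ ^ 2 * t / 2) with hK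
  set c : Ω → ℝ := fun ω => Real.exp (-(lam1 - β₀) * t + β₁ * W ω - β₁ ^ 2 * t / 2)
    with hc
  set g : Ω → ℝ := fun ω => Real.exp K * Real.exp (s * W ω) with hg
  set h : Ω → ℝ := fun ω => ‖Y₀ ω‖ ^ p with hh
  have hcg : ∀ ω, c ω ^ p = g ω := by
    intro ω
    show Real.exp (-(lam1 - β₀) * t + β₁ * W ω - β₁ ^ 2 * t / 2) ^ p
      = Real.exp K * Real.exp (s * W ω)
    rw [← Real.exp_add, ← Real.exp_mul]
    congr 1
    rw [hK, hs]
    ring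
  -- pointwise norm bound
  have hnorm : ∀ ω, ‖Y ω‖ ≤ c ω * ‖Y₀ ω‖ := by
    intro ω
    have hc0 : 0 ≤ c ω := (Real.exp_pos _).le
    rw [EuclideanSpace.norm_eq, EuclideanSpace.norm_eq,
      ← Real.sqrt_sq hc0, ← Real.sqrt_mul (sq_nonneg _)]
    refine Real.sqrt_le_sqrt ?_
    rw [Finset.mul_sum]
    refine Finset.sum_le_sum fun k _ => ?_
    rw [hY ω k]
    have hek : Real.exp (-(lam k - β₀) * t + β₁ * W ω - β₁ ^ 2 * t / 2) ≤ c ω := by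
      refine Real.exp_le_exp.mpr ?_
      have : -(lam k - β₀) * t ≤ -(lam1 - β₀) * t := by nlinarith [hlam k]
      linarith
    have he0 : 0 ≤ Real.exp (-(lam k - β₀) * t + β₁ * W ω - β₁ ^ 2 * t / 2) :=
      (Real.exp_pos _).le
    rw [norm_mul, mul_pow, Real.norm_eq_abs, abs_of_nonneg he0]
    gcongr
  have hle : ∀ ω, ‖Y ω‖ ^ p ≤ g ω * h ω := by
    intro ω
    have h1 : ‖Y ω‖ ^ p ≤ (c ω * ‖Y₀ ω‖) ^ p :=
      Real.rpow_le_rpow (norm_nonneg _) (hnorm ω) hp0.le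
    calc ‖Y ω‖ ^ p ≤ (c ω * ‖Y₀ ω‖) ^ p := h1
      _ = c ω ^ p * ‖Y₀ ω‖ ^ p :=
          Real.mul_rpow (Real.exp_pos _).le (norm_nonneg _)
      _ = g ω * h ω := by rw [hcg]
  -- measurable auxiliaries
  have hφ : Measurable fun x : ℝ => Real.exp K * Real.exp (s * x) :=
    (measurable_const.mul ((measurable_const_mul s).exp))
  have hψ : Measurable fun y : EuclideanSpace ℝ (Fin N) => ‖y‖ ^ p :=
    measurable_norm.pow_const p
  have hind2 : IndepFun h g P := hindep.comp hψ hφ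
  -- integrability of g
  have hv : (⟨t, ht.le⟩ : NNReal) ≠ 0 := by
    intro hcontra
    exact ht.ne' (congrArg NNReal.toReal hcontra)
  have hgauss := mgf_gauss s hv
  have hgint : Integrable g P := by
    have h1 : Integrable (fun x => Real.exp (s * x)) (Measure.map W P) := by
      rw [hWlaw]; exact hgauss.1
    have h2 : Integrable (fun ω => Real.exp (s * W ω)) P := by
      have := (integrable_map_measure
        (((measurable_const_mul s).exp).aestronglyMeasurable) hWmeas.aemeasurable).mp h1
      exact this
    exact h2.const_mul _
  have hmulint : Integrable (fun ω => g ω * h ω) P := by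
    have := hind2.integrable_mul hY₀int hgint
    exact this.congr (Filter.Eventually.of_forall fun ω => mul_comm _ _)
  -- main bound
  have hmono : ∫ ω, ‖Y ω‖ ^ p ∂P ≤ ∫ ω, g ω * h ω ∂P := by
    refine integral_mono_of_nonneg ?_ hmulint ?_
    · exact Filter.Eventually.of_forall fun ω => Real.rpow_nonneg (norm_nonneg _) p
    · exact Filter.Eventually.of_forall hle
  have hsplit : ∫ ω, g ω * h ω ∂P = (∫ ω, g ω ∂P) * ∫ ω, h ω ∂P :=
    hind2.symm.integral_fun_mul_eq_mul_integral hgint.aestronglyMeasurable hY₀int.aestronglyMeasurable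
  have hEg : ∫ ω, g ω ∂P
      = Real.exp (-(p * (lam1 - β₀) - p * (p - 1) / 2 * β₁ ^ 2) * t) := by
    have h1 : ∫ ω, Real.exp (s * W ω) ∂P
        = ∫ x, Real.exp (s * x) ∂(Measure.map W P) := by
      rw [integral_map hWmeas.aemeasurable
        (((measurable_const_mul s).exp).aestronglyMeasurable)]
    rw [hg]
    rw [integral_const_mul, h1, hWlaw, hgauss.2]
    rw [← Real.exp_add]
    congr 1
    show K + s ^ 2 * ((⟨t, ht.le⟩ : NNReal) : ℝ) / 2 = _
    rw [hK, hs]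
    norm_num [NNReal.coe_mk]
    ring
  rw [hEg] at hsplit
  exact hmono.trans_eq hsplit
end

section
/- Let β₁ ∈ ℝ. For each τ > 0 the function x ↦ log|1 + β₁·√τ·x| is integrable with respect to γ = gaussianReal 0 1, and setting ℓ(τ) = ∫ log|1 + β₁·√τ·x| dγ(x), one has ℓ(τ) + (β₁²/2)·τ = o(τ) as τ → 0⁺ (i.e., the left-hand side is little-o of τ in the limit τ → 0 from the right). -/
open Real MeasureTheory ProbabilityTheory Asymptotics Filter
open scoped NNReal ENNReal

namespace OneStepAux

noncomputable def w (x : ℝ) : ℝ := gaussianPDFReal 0 1 x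

lemma w_def (x : ℝ) : w x = (Real.sqrt (2 * π))⁻¹ * Real.exp (-(x ^ 2) / 2) := by
  simp [w, gaussianPDFReal]

lemma w_nonneg (x : ℝ) : 0 ≤ w x := gaussianPDFReal_nonneg 0 1 x

lemma integrable_iff (g : ℝ → ℝ) :
    Integrable g (gaussianReal 0 1) ↔ Integrable (fun x => g x * w x) volume := by
  rw [gaussianReal_of_var_ne_zero 0 one_ne_zero, gaussianPDF_def,
    integrable_withDensity_iff ((measurable_gaussianPDFReal 0 1).ennreal_ofReal)
      (Filter.Eventually.of_forall fun x => ENNReal.ofReal_lt_top)]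
  have : (fun x => g x * (ENNReal.ofReal (gaussianPDFReal 0 1 x)).toReal)
      = fun x => g x * w x := by
    funext x; rw [ENNReal.toReal_ofReal (gaussianPDFReal_nonneg 0 1 x)]; rfl
  rw [this]

lemma integral_eq (g : ℝ → ℝ) :
    ∫ x, g x ∂(gaussianReal 0 1) = ∫ x, g x * w x := by
  rw [gaussianReal_of_var_ne_zero 0 one_ne_zero, gaussianPDF_def]
  have h1 : (fun x => ENNReal.ofReal (gaussianPDFReal 0 1 x)) =
      fun x => (((gaussianPDFReal 0 1 x).toNNReal : ℝ≥0) : ℝ≥0∞) := rfl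
  rw [h1, integral_withDensity_eq_integral_smul (measurable_gaussianPDFReal 0 1).real_toNNReal g]
  congr 1; funext x
  rw [NNReal.smul_def, smul_eq_mul, Real.coe_toNNReal _ (gaussianPDFReal_nonneg 0 1 x), mul_comm]
  rfl

lemma integrable_pow_mul_exp (n : ℕ) :
    Integrable (fun x : ℝ => x ^ n * Real.exp (-(x ^ 2) / 2)) volume := by
  have h := integrable_rpow_mul_exp_neg_mul_sq (show (0:ℝ) < 1/2 by norm_num)
    (show (-1:ℝ) < (n:ℝ) by exact lt_of_lt_of_le neg_one_lt_zero (Nat.cast_nonneg n))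
  have h2 : (fun x : ℝ => x ^ (n:ℝ) * Real.exp (-(1/2) * x ^ 2))
      = fun x : ℝ => x ^ n * Real.exp (-(x ^ 2) / 2) := by
    funext x
    rw [Real.rpow_natCast, show -(1/2 : ℝ) * x ^ 2 = -(x ^ 2) / 2 from by ring]
  rwa [h2] at h

lemma integrable_pow_mul_w (n : ℕ) : Integrable (fun x : ℝ => x ^ n * w x) volume := by
  refine ((integrable_pow_mul_exp n).const_mul ((Real.sqrt (2*π))⁻¹)).congr
    (Filter.Eventually.of_forall fun x => ?_)
  dsimp only; rw [w_def]; ring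

lemma integrable_pow_gauss (n : ℕ) : Integrable (fun x : ℝ => x ^ n) (gaussianReal 0 1) :=
  (integrable_iff _).2 (integrable_pow_mul_w n)

lemma integrable_abs_pow_gauss (n : ℕ) :
    Integrable (fun x : ℝ => |x| ^ n) (gaussianReal 0 1) := by
  simpa [abs_pow] using (integrable_pow_gauss n).abs

lemma integral_id_gauss : ∫ x, x ∂(gaussianReal 0 1) = 0 := by
  rw [integral_eq]
  have hw : ∀ x : ℝ, w (-x) = w x := fun x => by rw [w_def, w_def, neg_sq]
  have h1 : ∫ x : ℝ, x * w x = - ∫ x : ℝ, x * w x := by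
    conv_lhs => rw [← integral_neg_eq_self (fun x => x * w x) volume]
    simp only [hw, neg_mul, integral_neg]
  linarith

lemma integral_sq_exp : ∫ x : ℝ, x ^ 2 * Real.exp (-(x ^ 2) / 2) = Real.sqrt (2 * π) := by
  have hu : ∀ x : ℝ, HasDerivAt (fun y : ℝ => y) 1 x := fun x => hasDerivAt_id x
  have hv : ∀ x : ℝ, HasDerivAt (fun y : ℝ => -Real.exp (-(y ^ 2) / 2))
      (x * Real.exp (-(x ^ 2) / 2)) x := by
    intro x
    have h1 : HasDerivAt (fun y : ℝ => -(y ^ 2) / 2) (-x) x := by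
      have h0 := ((hasDerivAt_pow 2 x).neg.div_const 2)
      refine h0.congr_deriv ?_
      push_cast
      ring
    have h2 := (h1.exp).neg
    rw [show -(Real.exp (-(x ^ 2) / 2) * -x) = x * Real.exp (-(x ^ 2) / 2) from by ring] at h2
    exact h2
  have huv' : Integrable ((fun y : ℝ => y) * fun x => x * Real.exp (-(x ^ 2) / 2)) volume := by
    refine (integrable_pow_mul_exp 2).congr (Filter.Eventually.of_forall fun x => ?_)
    simp [Pi.mul_apply]; ring
  have hu'v : Integrable ((fun _ : ℝ => (1:ℝ)) * fun y : ℝ => -Real.exp (-(y ^ 2) / 2)) volume := by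
    refine ((integrable_pow_mul_exp 0).neg).congr (Filter.Eventually.of_forall fun x => ?_)
    simp [Pi.mul_apply]
  have huv : Integrable ((fun y : ℝ => y) * fun y : ℝ => -Real.exp (-(y ^ 2) / 2)) volume := by
    refine ((integrable_pow_mul_exp 1).neg).congr (Filter.Eventually.of_forall fun x => ?_)
    simp [Pi.mul_apply]
  have key := integral_mul_deriv_eq_deriv_mul_of_integrable (fun x _ => hu x) (fun x _ => hv x) huv' hu'v huv
  have e1 : (fun x : ℝ => x * (x * Real.exp (-(x ^ 2) / 2))) =
      fun x : ℝ => x ^ 2 * Real.exp (-(x ^ 2) / 2) := funext fun x => by ring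
  have e2 : (fun x : ℝ => (1:ℝ) * -Real.exp (-(x ^ 2) / 2)) =
      fun x : ℝ => -Real.exp (-(x ^ 2) / 2) := funext fun x => by ring
  rw [e1, e2] at key
  rw [key, integral_neg, neg_neg]
  have e3 : (fun x : ℝ => Real.exp (-(x ^ 2) / 2)) =
      fun x : ℝ => Real.exp (-(1/2) * x ^ 2) := funext fun x => by ring_nf
  rw [e3, integral_gaussian]
  rw [show π / (1/2 : ℝ) = 2 * π from by ring]

lemma integral_sq_gauss : ∫ x, x ^ 2 ∂(gaussianReal 0 1) = 1 := by
  rw [integral_eq]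
  have e : (fun x : ℝ => x ^ 2 * w x) =
      fun x => (Real.sqrt (2*π))⁻¹ * (x ^ 2 * Real.exp (-(x ^ 2) / 2)) := by
    funext x; rw [w_def]; ring
  rw [e, integral_const_mul, integral_sq_exp]
  refine inv_mul_cancel₀ ?_
  positivity




noncomputable def Q (u : ℝ) : ℝ := if 1/2 < |u| then max 0 (-Real.log |1 + u|) else 0

lemma Q_nonneg (u : ℝ) : 0 ≤ Q u := by
  unfold Q; split
  · exact le_max_left _ _
  · exact le_refl 0

lemma measurable_Q : Measurable Q := by
  unfold Q
  exact Measurable.ite (measurableSet_lt measurable_const measurable_abs)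
    (measurable_const.max ((Real.measurable_log.comp (measurable_id.const_add 1).abs).neg))
    measurable_const

lemma taylor_bd {u : ℝ} (hu : |u| ≤ 1/2) :
    |Real.log |1 + u| - u + u ^ 2 / 2| ≤ 2 * |u| ^ 3 := by
  have h1 : |(-u)| < 1 := by rw [abs_neg]; linarith
  have h := Real.abs_log_sub_add_sum_range_le h1 2
  have hpos : (0:ℝ) < 1 + u := by
    rcases abs_le.1 hu with ⟨h2, _⟩; linarith
  have hs : ∑ i ∈ Finset.range 2, (-u) ^ (i + 1) / ((i:ℝ) + 1) = -u + u ^ 2 / 2 := by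
    simp [Finset.sum_range_succ]; ring
  rw [hs, sub_neg_eq_add, abs_neg] at h
  have e : -u + u ^ 2 / 2 + Real.log (1 + u) = Real.log (1 + u) - u + u ^ 2 / 2 := by ring
  rw [e] at h
  rw [abs_of_pos hpos]
  calc |Real.log (1 + u) - u + u ^ 2 / 2| ≤ |u| ^ (2+1) / (1 - |u|) := h
    _ = |u| ^ 3 / (1 - |u|) := by norm_num
    _ ≤ 2 * |u| ^ 3 := by
        rw [div_le_iff₀ (by linarith : (0:ℝ) < 1 - |u|)]
        nlinarith [mul_nonneg (pow_nonneg (abs_nonneg u) 3)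
          (by linarith : (0:ℝ) ≤ 1 - 2 * |u|)]

lemma abs_log_le (u : ℝ) :
    |(Real.log |1 + u|)| ≤ |u| + max 0 (-Real.log |1 + u|) := by
  rcases le_or_gt (Real.log |1 + u|) 0 with h | h
  · rw [abs_of_nonpos h]
    have := le_max_right (0:ℝ) (-Real.log |1 + u|)
    linarith [abs_nonneg u]
  · rw [abs_of_pos h]
    have h0 : (0:ℝ) < |1 + u| := by
      rcases (abs_nonneg (1+u)).eq_or_lt with he | hl
      · exfalso; rw [← he, Real.log_zero] at h; exact lt_irrefl 0 h
      · exact hl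
    have h2 := Real.log_le_sub_one_of_pos h0
    have h3 : |1 + u| ≤ 1 + |u| := by
      calc |1 + u| ≤ |(1:ℝ)| + |u| := abs_add_le 1 u
        _ = 1 + |u| := by rw [abs_one]
    have h4 := le_max_left (0:ℝ) (-Real.log |1 + u|)
    linarith

lemma h_bd (u : ℝ) :
    |Real.log |1 + u| - u + u ^ 2 / 2| ≤ 2 * |u| ^ 3 + 18 * u ^ 4 + Q u := by
  rcases le_or_gt |u| (1/2) with hu | hu
  · have h1 := taylor_bd hu
    have h2 : Q u = 0 := if_neg (not_lt.2 hu)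
    nlinarith [pow_nonneg (sq_nonneg u) 2, sq_nonneg (u^2)]
  · have hQ : Q u = max 0 (-Real.log |1 + u|) := if_pos hu
    have htri : |Real.log |1 + u| - u + u ^ 2 / 2|
        ≤ |(Real.log |1 + u|)| + |u| + u ^ 2 / 2 := by
      calc |Real.log |1 + u| - u + u ^ 2 / 2|
          ≤ |Real.log |1 + u| - u| + |u ^ 2 / 2| := abs_add_le _ _
        _ ≤ (|(Real.log |1 + u|)| + |u|) + |u ^ 2 / 2| := by
            gcongr; exact abs_sub _ _
        _ = |(Real.log |1 + u|)| + |u| + u ^ 2 / 2 := by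
            rw [abs_of_nonneg (by positivity : (0:ℝ) ≤ u ^ 2 / 2)]
    have hlog := abs_log_le u
    have habs4 : |u| ^ 4 = u ^ 4 := by
      rw [← abs_pow]; exact abs_of_nonneg (by positivity)
    have hsq : |u| ^ 2 = u ^ 2 := sq_abs u
    have hp : 2 * |u| + u ^ 2 / 2 ≤ 18 * u ^ 4 := by
      nlinarith [mul_nonneg (by linarith : (0:ℝ) ≤ |u| - 1/2)
        (by positivity : (0:ℝ) ≤ 18 * |u| ^ 3 + 9 * |u| ^ 2 + 4 * |u|)]
    have h30 : (0:ℝ) ≤ 2 * |u| ^ 3 := by positivity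
    rw [hQ]
    linarith

lemma neglog_le {t : ℝ} (ht : 0 ≤ t) : -Real.log t ≤ 2 * t ^ (-(1/2) : ℝ) := by
  rcases ht.eq_or_lt with he | hpos
  · rw [← he, Real.log_zero, Real.zero_rpow (by norm_num : (-(1/2):ℝ) ≠ 0)]
    norm_num
  · have hs : (0:ℝ) < Real.sqrt t := Real.sqrt_pos.2 hpos
    have hlog : Real.log t = 2 * Real.log (Real.sqrt t) := by
      conv_lhs => rw [← Real.sq_sqrt ht]
      rw [Real.log_pow]; norm_num
    have h1 : Real.log (Real.sqrt t)⁻¹ ≤ (Real.sqrt t)⁻¹ - 1 :=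
      Real.log_le_sub_one_of_pos (inv_pos.2 hs)
    rw [Real.log_inv] at h1
    have h2 : t ^ (-(1/2) : ℝ) = (Real.sqrt t)⁻¹ := by
      rw [Real.rpow_neg ht, ← Real.sqrt_eq_rpow]
    rw [h2, hlog]
    nlinarith [inv_pos.2 hs]

lemma log_bd (u : ℝ) : |(Real.log |1 + u|)| ≤ 2 * |u| + Q u := by
  rcases le_or_gt |u| (1/2) with hu | hu
  · have h1 : |(-u)| < 1 := by rw [abs_neg]; linarith
    have h := Real.abs_log_sub_add_sum_range_le h1 0
    simp only [Finset.range_zero, Finset.sum_empty, zero_add, sub_neg_eq_add, abs_neg,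
      pow_one] at h
    have hpos : (0:ℝ) < 1 + u := by
      rcases abs_le.1 hu with ⟨h2, _⟩; linarith
    rw [abs_of_pos hpos]
    have h2 : |u| / (1 - |u|) ≤ 2 * |u| := by
      rw [div_le_iff₀ (by linarith : (0:ℝ) < 1 - |u|)]
      nlinarith [abs_nonneg u]
    have := Q_nonneg u
    linarith
  · have hQ : Q u = max 0 (-Real.log |1 + u|) := if_pos hu
    have := abs_log_le u
    rw [hQ]
    linarith [abs_nonneg u]

lemma exp_neg_le {y : ℝ} (hy : 0 < y) : Real.exp (-y) ≤ 27 / y ^ 3 := by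
  have h1 := Real.add_one_le_exp (y/3)
  have h2 : (y/3) ^ 3 ≤ Real.exp (y/3) ^ 3 := by
    apply pow_le_pow_left₀ (by positivity)
    linarith
  have h3 : Real.exp (y/3) ^ 3 = Real.exp y := by
    rw [← Real.exp_nat_mul]; congr 1; push_cast; ring
  rw [Real.exp_neg]
  have h4 : (0:ℝ) < (y/3) ^ 3 := by positivity
  calc (Real.exp y)⁻¹ ≤ ((y/3) ^ 3)⁻¹ := by
        apply inv_anti₀ h4
        rw [← h3]; exact h2
    _ = 27 / y ^ 3 := by
        rw [div_pow, inv_div]; norm_num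

lemma rpow_half_neg_zero {x : ℝ} (hx : x < 0) : x ^ (-(1/2) : ℝ) = 0 := by
  rw [Real.rpow_def_of_neg hx, show (-(1/2):ℝ) * π = -(π/2) from by ring,
    Real.cos_neg, Real.cos_pi_div_two, mul_zero]

lemma abs_rpow_split (u : ℝ) :
    |u| ^ (-(1/2) : ℝ) = u ^ (-(1/2) : ℝ) + (-u) ^ (-(1/2) : ℝ) := by
  rcases lt_trichotomy u 0 with h | h | h
  · rw [abs_of_neg h, rpow_half_neg_zero h, zero_add]
  · subst h
    simp [Real.zero_rpow (show (-(1/2):ℝ) ≠ 0 from by norm_num)]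
  · rw [abs_of_pos h, rpow_half_neg_zero (by linarith : -u < 0), add_zero]

lemma base_II (a b : ℝ) :
    IntervalIntegrable (fun u : ℝ => |u| ^ (-(1/2) : ℝ)) volume a b := by
  have h1 : IntervalIntegrable (fun u : ℝ => u ^ (-(1/2) : ℝ)) volume a b :=
    intervalIntegral.intervalIntegrable_rpow' (by norm_num)
  have h2 : IntervalIntegrable (fun u : ℝ => (-u) ^ (-(1/2) : ℝ)) volume a b := by
    have h3 : IntervalIntegrable (fun u : ℝ => u ^ (-(1/2) : ℝ)) volume (-a) (-b) :=
      intervalIntegral.intervalIntegrable_rpow' (by norm_num)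
    simpa using (IntervalIntegrable.iff_comp_neg (f := fun u : ℝ => u ^ (-(1/2) : ℝ))).mp h3
  rw [show (fun u : ℝ => |u| ^ (-(1/2) : ℝ))
      = fun u : ℝ => u ^ (-(1/2) : ℝ) + (-u) ^ (-(1/2) : ℝ) from funext abs_rpow_split]
  exact h1.add h2

lemma base_int : ∫ u in (-1:ℝ)..1, |u| ^ (-(1/2) : ℝ) = 4 := by
  have h1 : IntervalIntegrable (fun u : ℝ => u ^ (-(1/2) : ℝ)) volume (-1) 1 :=
    intervalIntegral.intervalIntegrable_rpow' (by norm_num)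
  have h2 : IntervalIntegrable (fun u : ℝ => (-u) ^ (-(1/2) : ℝ)) volume (-1) 1 := by
    have h3 : IntervalIntegrable (fun u : ℝ => u ^ (-(1/2) : ℝ)) volume 1 (-1) :=
      intervalIntegral.intervalIntegrable_rpow' (by norm_num)
    simpa using (IntervalIntegrable.iff_comp_neg (f := fun u : ℝ => u ^ (-(1/2) : ℝ))).mp h3
  have A : ∫ u in (-1:ℝ)..1, u ^ (-(1/2) : ℝ) = 2 := by
    rw [integral_rpow (Or.inl (by norm_num : (-1:ℝ) < -(1/2)))]
    have hneg : ((-1:ℝ)) ^ ((-(1/2):ℝ) + 1) = 0 := by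
      rw [show (-(1/2):ℝ) + 1 = 1/2 from by norm_num,
        Real.rpow_def_of_neg (by norm_num : (-1:ℝ) < 0),
        show (1/2:ℝ) * π = π/2 from by ring, Real.cos_pi_div_two, mul_zero]
    rw [hneg, Real.one_rpow]
    norm_num
  have B : ∫ u in (-1:ℝ)..1, (-u) ^ (-(1/2) : ℝ) = 2 := by
    rw [intervalIntegral.integral_comp_neg (fun u : ℝ => u ^ (-(1/2) : ℝ))]
    simpa using A
  rw [show (fun u : ℝ => |u| ^ (-(1/2) : ℝ))
      = fun u : ℝ => u ^ (-(1/2) : ℝ) + (-u) ^ (-(1/2) : ℝ) from funext abs_rpow_split,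
    intervalIntegral.integral_add h1 h2, A, B]
  norm_num



lemma Q_bound (c : ℝ) (hc : c ≠ 0) :
    Integrable (fun x => Q (c * x)) (gaussianReal 0 1) ∧
    ∫ x, Q (c * x) ∂(gaussianReal 0 1) ≤ 110592 * |c| ^ 5 := by
  set a : ℝ := min 0 (-2/c) with ha_def
  set b : ℝ := max 0 (-2/c) with hb_def
  set S : Set ℝ := Set.Ioo a b with hS_def
  set g : ℝ → ℝ := fun x => |1 + c * x| ^ (-(1/2) : ℝ) with hg_def
  set C : ℝ := 2 * (Real.sqrt (2*π))⁻¹ * Real.exp (-(1/(8*c^2))) with hC_def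
  have hab : a ≤ b := min_le_max
  have hg_nonneg : ∀ x, 0 ≤ g x := fun x => Real.rpow_nonneg (abs_nonneg _) _
  have hC_nonneg : 0 ≤ C := by positivity
  have hg_II : IntervalIntegrable g volume a b := by
    have h1 := ((base_II (1 + c*a) (1 + c*b)).comp_add_left 1).comp_mul_left (c := c)
    have e1 : (1 + c * a - 1) / c = a := by field_simp; ring
    have e2 : (1 + c * b - 1) / c = b := by field_simp; ring
    rwa [e1, e2] at h1
  have hgS : IntegrableOn g S volume := by
    have h := intervalIntegrable_iff.mp hg_II
    rw [Set.uIoc_of_le hab] at h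
    exact h.mono_set Set.Ioo_subset_Ioc_self
  have hmaj_int : Integrable (fun x => C * S.indicator g x) volume :=
    (hgS.integrable_indicator measurableSet_Ioo).const_mul C
  have hnn : ∀ x, 0 ≤ Q (c*x) * w x := fun x => mul_nonneg (Q_nonneg _) (w_nonneg x)
  have hind_nonneg : ∀ x, 0 ≤ S.indicator g x :=
    fun x => Set.indicator_nonneg (fun y _ => hg_nonneg y) x
  have hble : ∀ x, Q (c*x) * w x ≤ C * S.indicator g x := by
    intro x
    by_cases h1 : 1/2 < |c*x|
    swap
    · rw [show Q (c*x) = 0 from if_neg h1, zero_mul]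
      exact mul_nonneg hC_nonneg (hind_nonneg x)
    · rw [show Q (c*x) = max 0 (-Real.log |1 + c*x|) from if_pos h1]
      by_cases h2 : |1 + c*x| < 1
      swap
      · have hl : 0 ≤ Real.log |1 + c*x| := Real.log_nonneg (not_lt.1 h2)
        rw [max_eq_left (by linarith), zero_mul]
        exact mul_nonneg hC_nonneg (hind_nonneg x)
      · have hxS : x ∈ S := by
          rcases abs_lt.mp h2 with ⟨hl, hr⟩
          have hcx1 : -2 < c * x := by linarith
          have hcx2 : c * x < 0 := by linarith
          rcases hc.lt_or_gt with hneg | hpos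
          · have hx1 : 0 < x := by
              rcases lt_or_ge 0 x with h | h
              · exact h
              · exfalso; nlinarith
            have hx2 : x < -2/c := by
              rw [lt_div_iff_of_neg hneg]
              linarith [mul_comm x c]
            exact ⟨lt_of_le_of_lt (min_le_left 0 (-2/c)) hx1,
              lt_of_lt_of_le hx2 (le_max_right 0 (-2/c))⟩
          · have hx2 : x < 0 := by
              rcases lt_or_ge x 0 with h | h
              · exact h
              · exfalso; nlinarith
            have hx1 : -2/c < x := by
              rw [div_lt_iff₀ hpos]
              linarith [mul_comm x c]
            exact ⟨lt_of_le_of_lt (min_le_right 0 (-2/c)) hx1,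
              lt_of_lt_of_le hx2 (le_max_left 0 (-2/c))⟩
        rw [Set.indicator_of_mem hxS]
        have hq : max 0 (-Real.log |1 + c*x|) ≤ 2 * g x := by
          apply max_le
          · positivity
          · exact neglog_le (abs_nonneg _)
        have hw : w x ≤ (Real.sqrt (2*π))⁻¹ * Real.exp (-(1/(8*c^2))) := by
          rw [w_def]
          apply mul_le_mul_of_nonneg_left _ (inv_nonneg.2 (Real.sqrt_nonneg _))
          apply Real.exp_le_exp.2
          have h3 : 1/2 < |c| * |x| := by rwa [← abs_mul]
          have h5 : 1/4 < c^2 * x^2 := by nlinarith [sq_abs c, sq_abs x, abs_nonneg c, abs_nonneg x]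
          rw [neg_div, neg_le_neg_iff]
          rw [div_le_div_iff₀ (by positivity) (by norm_num)]
          nlinarith [sq_nonneg c]
        calc max 0 (-Real.log |1 + c*x|) * w x
            ≤ (2 * g x) * ((Real.sqrt (2*π))⁻¹ * Real.exp (-(1/(8*c^2)))) := by
              apply mul_le_mul hq hw (w_nonneg x) (by positivity)
          _ = C * g x := by rw [hC_def]; ring
  have hmeas : AEStronglyMeasurable (fun x => Q (c*x) * w x) volume :=
    ((measurable_Q.comp (measurable_id.const_mul c)).mul
      (measurable_gaussianPDFReal 0 1)).aestronglyMeasurable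
  have hint : Integrable (fun x => Q (c*x) * w x) volume := by
    refine hmaj_int.mono' hmeas (Filter.Eventually.of_forall fun x => ?_)
    rw [Real.norm_eq_abs, abs_of_nonneg (hnn x)]
    exact hble x
  have hIg : Integrable (fun x => Q (c*x)) (gaussianReal 0 1) := (integrable_iff _).2 hint
  refine ⟨hIg, ?_⟩
  rw [integral_eq]
  have hmono : ∫ x, Q (c*x) * w x ≤ ∫ x, C * S.indicator g x :=
    integral_mono hint hmaj_int hble
  have hSval : ∫ x, S.indicator g x = ∫ x in a..b, g x := by
    rw [integral_indicator measurableSet_Ioo, ← integral_Ioc_eq_integral_Ioo,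
      ← intervalIntegral.integral_of_le hab]
  have hcomp : ∫ x in a..b, g x = |c|⁻¹ * 4 := by
    have h := intervalIntegral.integral_comp_add_mul
      (fun u : ℝ => |u| ^ (-(1/2) : ℝ)) hc 1 (a := a) (b := b)
    rcases hc.lt_or_gt with hneg | hpos
    · have hd : (0:ℝ) < -2/c := div_pos_of_neg_of_neg (by norm_num) hneg
      have ha0 : a = 0 := min_eq_left hd.le
      have hb0 : b = -2/c := max_eq_right hd.le
      have e2 : 1 + c * (-2/c) = -1 := by field_simp; ring
      rw [ha0, hb0, show (1:ℝ) + c * 0 = 1 from by ring, e2] at h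
      rw [ha0, hb0, h, intervalIntegral.integral_symm, base_int]
      rw [abs_of_neg hneg, smul_eq_mul, inv_neg]
      ring
    · have hd : -2/c ≤ 0 := by
        apply div_nonpos_of_nonpos_of_nonneg <;> [norm_num; exact hpos.le]
      have ha0 : a = -2/c := min_eq_right hd
      have hb0 : b = 0 := max_eq_left hd
      have e2 : 1 + c * (-2/c) = -1 := by field_simp; ring
      rw [ha0, hb0, show (1:ℝ) + c * 0 = 1 from by ring, e2] at h
      rw [ha0, hb0, h, base_int]
      rw [abs_of_pos hpos, smul_eq_mul]
  have hRHS : ∫ x, C * S.indicator g x = C * (|c|⁻¹ * 4) := by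
    rw [show (fun x => C * S.indicator g x) = fun x => C • S.indicator g x from rfl,
      integral_smul, hSval, hcomp, smul_eq_mul]
  have hexp : Real.exp (-(1/(8*c^2))) ≤ 13824 * c^6 := by
    have h27 := exp_neg_le (show (0:ℝ) < 1/(8*c^2) from by positivity)
    calc Real.exp (-(1/(8*c^2))) ≤ 27 / (1/(8*c^2))^3 := h27
      _ = 13824 * c^6 := by
          rw [one_div, inv_pow, div_inv_eq_mul]
          ring
  have hw0 : (Real.sqrt (2*π))⁻¹ ≤ 1 := by
    rw [inv_le_one_iff₀]
    right
    rw [show (1:ℝ) = Real.sqrt 1 from (Real.sqrt_one).symm]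
    apply Real.sqrt_le_sqrt
    nlinarith [Real.pi_gt_three]
  have habs6 : c^6 = |c|^6 := by
    rw [← abs_pow]; exact (abs_of_nonneg (by positivity)).symm
  have hcabs : (0:ℝ) < |c| := abs_pos.2 hc
  calc ∫ x, Q (c*x) * w x ≤ C * (|c|⁻¹ * 4) := by rw [← hRHS]; exact hmono
    _ = 8 * ((Real.sqrt (2*π))⁻¹ * (Real.exp (-(1/(8*c^2))) * |c|⁻¹)) := by
        rw [hC_def]; ring
    _ ≤ 8 * (1 * ((13824 * c^6) * |c|⁻¹)) := by
        have h1 : Real.exp (-(1/(8*c^2))) * |c|⁻¹ ≤ (13824 * c^6) * |c|⁻¹ :=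
          mul_le_mul_of_nonneg_right hexp (by positivity)
        have h2 : (Real.sqrt (2*π))⁻¹ * (Real.exp (-(1/(8*c^2))) * |c|⁻¹)
            ≤ 1 * ((13824 * c^6) * |c|⁻¹) := by
          apply mul_le_mul hw0 h1 (by positivity) (by norm_num)
        linarith
    _ = 110592 * (|c|^6 * |c|⁻¹) := by rw [habs6]; ring
    _ = 110592 * |c|^5 := by
        congr 1
        field_simp


lemma integrable_log_gauss (c : ℝ) :
    Integrable (fun x => Real.log |1 + c * x|) (gaussianReal 0 1) := by
  by_cases hc : c = 0
  · subst hc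
    simp only [zero_mul, add_zero, abs_one, Real.log_one]
    exact integrable_const 0
  · obtain ⟨hQint, -⟩ := Q_bound c hc
    have habs : Integrable (fun x : ℝ => |x|) (gaussianReal 0 1) := by
      simpa using integrable_abs_pow_gauss 1
    have hmajor : Integrable (fun x => 2 * |c| * |x| + Q (c * x)) (gaussianReal 0 1) :=
      (habs.const_mul (2 * |c|)).add hQint
    refine hmajor.mono' ?_ (Filter.Eventually.of_forall fun x => ?_)
    · exact (Real.measurable_log.comp
        ((measurable_id.const_mul c).const_add 1).abs).aestronglyMeasurable
    · rw [Real.norm_eq_abs]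
      calc |(Real.log |1 + c * x|)| ≤ 2 * |c * x| + Q (c * x) := log_bd (c * x)
        _ = 2 * |c| * |x| + Q (c * x) := by rw [abs_mul]; ring

lemma core : ∃ K : ℝ, 0 ≤ K ∧ ∀ c : ℝ, |c| ≤ 1 →
    |∫ x, (Real.log |1 + c * x| - c * x + (c * x) ^ 2 / 2) ∂(gaussianReal 0 1)|
      ≤ K * |c| ^ 3 := by
  set M3 : ℝ := ∫ x, |x| ^ 3 ∂(gaussianReal 0 1) with hM3
  set M4 : ℝ := ∫ x, x ^ 4 ∂(gaussianReal 0 1) with hM4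
  have hM3nn : 0 ≤ M3 := integral_nonneg fun x => by positivity
  have hM4nn : 0 ≤ M4 := integral_nonneg fun x => by positivity
  refine ⟨2 * M3 + 18 * M4 + 110592, by linarith, fun c hc1 => ?_⟩
  by_cases hc : c = 0
  · subst hc
    simp
  · obtain ⟨hQint, hQval⟩ := Q_bound c hc
    have hlog := integrable_log_gauss c
    have hx1 : Integrable (fun x => c * x) (gaussianReal 0 1) := by
      have := (integrable_pow_gauss 1).const_mul c
      simpa using this
    have hx2 : Integrable (fun x => (c * x) ^ 2 / 2) (gaussianReal 0 1) := by
      refine ((integrable_pow_gauss 2).const_mul (c ^ 2 / 2)).congr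
        (Filter.Eventually.of_forall fun x => ?_)
      dsimp only; ring
    have hint : Integrable
        (fun x => Real.log |1 + c * x| - c * x + (c * x) ^ 2 / 2) (gaussianReal 0 1) := by
      have hsub : Integrable (fun x => Real.log |1 + c * x| - c * x) (gaussianReal 0 1) :=
        hlog.sub hx1
      exact hsub.add hx2
    have hmaj3 : Integrable (fun x : ℝ => 2 * |c| ^ 3 * |x| ^ 3) (gaussianReal 0 1) := by
      have := (integrable_abs_pow_gauss 3).const_mul (2 * |c| ^ 3)
      simpa using this
    have hmaj4 : Integrable (fun x : ℝ => 18 * c ^ 4 * x ^ 4) (gaussianReal 0 1) := by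
      have := (integrable_pow_gauss 4).const_mul (18 * c ^ 4)
      simpa using this
    have hmaj34 : Integrable (fun x : ℝ => 2 * |c| ^ 3 * |x| ^ 3 + 18 * c ^ 4 * x ^ 4)
        (gaussianReal 0 1) := hmaj3.add hmaj4
    have hmajint : Integrable
        (fun x => 2 * |c| ^ 3 * |x| ^ 3 + 18 * c ^ 4 * x ^ 4 + Q (c * x))
        (gaussianReal 0 1) := (hmaj3.add hmaj4).add hQint
    have hptw : ∀ x, |Real.log |1 + c * x| - c * x + (c * x) ^ 2 / 2|
        ≤ 2 * |c| ^ 3 * |x| ^ 3 + 18 * c ^ 4 * x ^ 4 + Q (c * x) := by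
      intro x
      calc |Real.log |1 + c * x| - c * x + (c * x) ^ 2 / 2|
          ≤ 2 * |c * x| ^ 3 + 18 * (c * x) ^ 4 + Q (c * x) := h_bd (c * x)
        _ = 2 * |c| ^ 3 * |x| ^ 3 + 18 * c ^ 4 * x ^ 4 + Q (c * x) := by
            rw [abs_mul, mul_pow, mul_pow]; ring
    have habs : |∫ x, (Real.log |1 + c * x| - c * x + (c * x) ^ 2 / 2) ∂(gaussianReal 0 1)|
        ≤ ∫ x, |Real.log |1 + c * x| - c * x + (c * x) ^ 2 / 2| ∂(gaussianReal 0 1) := by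
      have := norm_integral_le_integral_norm (μ := gaussianReal 0 1)
        (f := fun x => Real.log |1 + c * x| - c * x + (c * x) ^ 2 / 2)
      simpa [Real.norm_eq_abs] using this
    have hmono : ∫ x, |Real.log |1 + c * x| - c * x + (c * x) ^ 2 / 2| ∂(gaussianReal 0 1)
        ≤ ∫ x, (2 * |c| ^ 3 * |x| ^ 3 + 18 * c ^ 4 * x ^ 4 + Q (c * x)) ∂(gaussianReal 0 1) :=
      integral_mono hint.abs hmajint hptw
    have hsplit : ∫ x, (2 * |c| ^ 3 * |x| ^ 3 + 18 * c ^ 4 * x ^ 4 + Q (c * x))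
          ∂(gaussianReal 0 1)
        = 2 * |c| ^ 3 * M3 + 18 * c ^ 4 * M4 + ∫ x, Q (c * x) ∂(gaussianReal 0 1) := by
      rw [integral_add hmaj34 hQint, integral_add hmaj3 hmaj4]
      congr 1
      congr 1
      · rw [show (fun x : ℝ => 2 * |c| ^ 3 * |x| ^ 3) = fun x : ℝ => (2 * |c| ^ 3) • |x| ^ 3
          from funext fun x => by simp [smul_eq_mul], integral_smul, smul_eq_mul]
      · rw [show (fun x : ℝ => 18 * c ^ 4 * x ^ 4) = fun x : ℝ => (18 * c ^ 4) • x ^ 4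
          from funext fun x => by simp [smul_eq_mul], integral_smul, smul_eq_mul]
    have hc4 : c ^ 4 ≤ |c| ^ 3 := by
      have h1 : |c| ^ 4 = c ^ 4 := by
        rw [← abs_pow]; exact abs_of_nonneg (by positivity)
      have h2 : |c| ^ 4 ≤ |c| ^ 3 := pow_le_pow_of_le_one (abs_nonneg c) hc1 (by norm_num)
      linarith
    have hc5 : |c| ^ 5 ≤ |c| ^ 3 := pow_le_pow_of_le_one (abs_nonneg c) hc1 (by norm_num)
    have h3nn : (0:ℝ) ≤ |c| ^ 3 := by positivity
    calc |∫ x, (Real.log |1 + c * x| - c * x + (c * x) ^ 2 / 2) ∂(gaussianReal 0 1)|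
        ≤ 2 * |c| ^ 3 * M3 + 18 * c ^ 4 * M4 + ∫ x, Q (c * x) ∂(gaussianReal 0 1) := by
          rw [← hsplit]; exact le_trans habs hmono
      _ ≤ 2 * |c| ^ 3 * M3 + 18 * (|c| ^ 3) * M4 + 110592 * |c| ^ 3 := by
          have := mul_le_mul_of_nonneg_right hc4 hM4nn
          have := mul_le_mul_of_nonneg_left hc5 (show (0:ℝ) ≤ 110592 by norm_num)
          linarith [hQval]
      _ = (2 * M3 + 18 * M4 + 110592) * |c| ^ 3 := by ring

end OneStepAux

open OneStepAux in
/-- One-step logarithmic expansion for the Euler–Maruyama scheme: with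
`ℓ(τ) = E(log|1 + β₁ ΔW|)`, `ΔW ∼ N(0, τ)`, the integrand is integrable for
every `τ > 0` and `ℓ(τ) = -(β₁²/2) τ + o(τ)` as `τ → 0⁺`. -/
theorem one_step_log_moment_expansion (β₁ : ℝ) :
    (∀ τ : ℝ, 0 < τ →
      Integrable (fun x => Real.log |1 + β₁ * Real.sqrt τ * x|)
        (gaussianReal 0 1)) ∧
    (fun τ : ℝ =>
        (∫ x, Real.log |1 + β₁ * Real.sqrt τ * x| ∂(gaussianReal 0 1)) +
          β₁ ^ 2 / 2 * τ)
      =o[nhdsWithin 0 (Set.Ioi 0)] (fun τ : ℝ => τ) := by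
  constructor
  · intro τ _
    exact integrable_log_gauss (β₁ * Real.sqrt τ)
  · obtain ⟨K, hK0, hK⟩ := core
    rw [isLittleO_iff]
    intro ε hε
    have hKb : (0:ℝ) < (K + 1) * (|β₁| + 1) ^ 3 := by positivity
    set δ : ℝ := min (((|β₁| + 1)⁻¹) ^ 2) ((ε / ((K + 1) * (|β₁| + 1) ^ 3)) ^ 2) with hδ
    have hδpos : 0 < δ := lt_min_iff.2 ⟨by positivity, by positivity⟩
    filter_upwards [Ioo_mem_nhdsGT hδpos] with τ hτ
    obtain ⟨hτ0, hτδ⟩ := hτ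
    set c : ℝ := β₁ * Real.sqrt τ with hcdef
    have hst : Real.sqrt τ ^ 2 = τ := Real.sq_sqrt hτ0.le
    have hsq1 : Real.sqrt τ ≤ (|β₁| + 1)⁻¹ := by
      have h1 : τ ≤ ((|β₁| + 1)⁻¹) ^ 2 := le_of_lt (lt_of_lt_of_le hτδ (min_le_left _ _))
      calc Real.sqrt τ ≤ Real.sqrt (((|β₁| + 1)⁻¹) ^ 2) := Real.sqrt_le_sqrt h1
        _ = (|β₁| + 1)⁻¹ := Real.sqrt_sq (by positivity)
    have hsq2 : Real.sqrt τ ≤ ε / ((K + 1) * (|β₁| + 1) ^ 3) := by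
      have h1 : τ ≤ (ε / ((K + 1) * (|β₁| + 1) ^ 3)) ^ 2 :=
        le_of_lt (lt_of_lt_of_le hτδ (min_le_right _ _))
      calc Real.sqrt τ ≤ Real.sqrt ((ε / ((K + 1) * (|β₁| + 1) ^ 3)) ^ 2) :=
            Real.sqrt_le_sqrt h1
        _ = ε / ((K + 1) * (|β₁| + 1) ^ 3) := Real.sqrt_sq (by positivity)
    have hcabs : |c| = |β₁| * Real.sqrt τ := by
      rw [hcdef, abs_mul, abs_of_nonneg (Real.sqrt_nonneg τ)]
    have hc1 : |c| ≤ 1 := by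
      rw [hcabs]
      calc |β₁| * Real.sqrt τ ≤ (|β₁| + 1) * (|β₁| + 1)⁻¹ :=
            mul_le_mul (by linarith) hsq1 (Real.sqrt_nonneg τ) (by positivity)
        _ = 1 := mul_inv_cancel₀ (by positivity)
    have hx1 : Integrable (fun x => c * x) (gaussianReal 0 1) := by
      have := (integrable_pow_gauss 1).const_mul c
      simpa using this
    have hx2 : Integrable (fun x => (c * x) ^ 2 / 2) (gaussianReal 0 1) := by
      refine ((integrable_pow_gauss 2).const_mul (c ^ 2 / 2)).congr
        (Filter.Eventually.of_forall fun x => ?_)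
      dsimp only; ring
    have key : (∫ x, Real.log |1 + β₁ * Real.sqrt τ * x| ∂(gaussianReal 0 1)) + β₁ ^ 2 / 2 * τ
        = ∫ x, (Real.log |1 + c * x| - c * x + (c * x) ^ 2 / 2) ∂(gaussianReal 0 1) := by
      have hsub : Integrable (fun x => Real.log |1 + c * x| - c * x) (gaussianReal 0 1) :=
        (integrable_log_gauss c).sub hx1
      rw [integral_add hsub hx2, integral_sub (integrable_log_gauss c) hx1]
      have e1 : ∫ x, c * x ∂(gaussianReal 0 1) = 0 := by
        rw [show (fun x : ℝ => c * x) = fun x : ℝ => c • x from funext fun x => by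
          simp [smul_eq_mul], integral_smul, integral_id_gauss, smul_zero]
      have e2 : ∫ x, (c * x) ^ 2 / 2 ∂(gaussianReal 0 1) = c ^ 2 / 2 := by
        rw [show (fun x : ℝ => (c * x) ^ 2 / 2) = fun x : ℝ => (c ^ 2 / 2) • x ^ 2 from
          funext fun x => by simp [smul_eq_mul]; ring, integral_smul, integral_sq_gauss,
          smul_eq_mul, mul_one]
      rw [e1, e2]
      have e3 : c ^ 2 = β₁ ^ 2 * τ := by
        rw [hcdef, mul_pow, hst]
      rw [e3]
      ring
    rw [key, Real.norm_eq_abs, Real.norm_eq_abs, abs_of_pos hτ0]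
    have hbound := hK c hc1
    have hc3 : |c| ^ 3 = |β₁| ^ 3 * Real.sqrt τ * τ := by
      rw [hcabs, mul_pow, show Real.sqrt τ ^ 3 = Real.sqrt τ ^ 2 * Real.sqrt τ from by ring,
        hst]
      ring
    calc |∫ x, (Real.log |1 + c * x| - c * x + (c * x) ^ 2 / 2) ∂(gaussianReal 0 1)|
        ≤ K * |c| ^ 3 := hbound
      _ = (K * |β₁| ^ 3 * Real.sqrt τ) * τ := by rw [hc3]; ring
      _ ≤ ε * τ := by
          apply mul_le_mul_of_nonneg_right _ hτ0.le
          have h1 : K * |β₁| ^ 3 ≤ (K + 1) * (|β₁| + 1) ^ 3 :=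
            mul_le_mul (by linarith)
              (pow_le_pow_left₀ (abs_nonneg _) (by linarith) 3) (by positivity) (by linarith)
          calc K * |β₁| ^ 3 * Real.sqrt τ
              ≤ ((K + 1) * (|β₁| + 1) ^ 3) * (ε / ((K + 1) * (|β₁| + 1) ^ 3)) :=
                mul_le_mul h1 hsq2 (Real.sqrt_nonneg τ) (le_of_lt hKb)
            _ = ε := by field_simp
end

section
/- Fix an integer N ≥ 1, a real p ≥ 1, reals β₀, β₁, λ₁, and λ : Fin N → ℝ with λ_k ≥ λ₁ for all k, and assume β₁² > 2(β₀ − λ₁). Then there exists τ₀ > 0 such that for every τ ∈ (0, τ₀) with 1 + τ(λ_k − β₀) > 0 for all k, the following holds. On any probability space carrying a sequence (ΔW_n)_{n∈ℕ} of real random variables each with law gaussianReal 0 τ and a measurable Y₀ : Ω → ℝ^N such that the family (Y₀, ΔW₀, ΔW₁, …) is mutually independent, define recursively Y_{n+1}(k) = (Y_n(k) + β₁·ΔW_n·Y_n(k))/(1 + τ(λ_k − β₀)) for all n ∈ ℕ and k. Then there exists a random variable ξ : Ω → [0, ∞) that is almost surely finite such that, almost surely, ‖Y_n‖^p ≤ ξ·e^{−(μ_as/4)·nτ}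 for all n ∈ ℕ, where μ_as := (p/2)·β₁² + p(λ₁ − β₀). -/
open Real MeasureTheory ProbabilityTheory Filter Set Topology
open scoped ENNReal NNReal

section AuxLemmas

lemma log_le_cubic' {u : ℝ} (hu : -1 < u) : Real.log (1+u) ≤ u - u^2/2 + u^3/3 := by
  set f : ℝ → ℝ := fun u => u - u^2/2 + u^3/3 - Real.log (1+u) with hf
  have hderiv : ∀ x : ℝ, -1 < x → HasDerivAt f (x^3/(1+x)) x := by
    intro x hx
    have h1 : (0:ℝ) < 1 + x := by linarith
    have hlog : HasDerivAt (fun u : ℝ => Real.log (1+u)) ((1+x)⁻¹) x := by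
      have := (Real.hasDerivAt_log h1.ne').comp x ((hasDerivAt_id x).const_add 1)
      exact this.congr_deriv (mul_one _)
    have hpoly : HasDerivAt (fun u : ℝ => u - u^2/2 + u^3/3) (1 - x + x^2) x := by
      have h := (((hasDerivAt_id x).sub ((hasDerivAt_pow 2 x).div_const 2)).add
        ((hasDerivAt_pow 3 x).div_const 3))
      refine h.congr_deriv ?_
      ring
    have := hpoly.sub hlog
    refine this.congr_deriv ?_
    field_simp
    ring
  have hf0 : f 0 = 0 := by simp [hf]
  have key : 0 ≤ f u := by
    rcases le_or_gt 0 u with h | h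
    · have hmono : MonotoneOn f (Ici (0:ℝ)) := by
        apply monotoneOn_of_deriv_nonneg (convex_Ici 0)
        · intro x hx
          exact (hderiv x (by simp at hx; linarith)).continuousAt.continuousWithinAt
        · intro x hx
          rw [interior_Ici] at hx
          exact (hderiv x (by simp at hx; linarith)).differentiableAt.differentiableWithinAt
        · intro x hx
          rw [interior_Ici] at hx
          rw [(hderiv x (by simp at hx; linarith)).deriv]
          have hx' : (0:ℝ) < x := hx
          positivity
      have := hmono (Set.self_mem_Ici : (0:ℝ) ∈ Ici 0) (h : u ∈ Ici 0) h
      linarith [hf0 ▸ this]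
    · have hanti : AntitoneOn f (Ioc (-1:ℝ) 0) := by
        apply antitoneOn_of_deriv_nonpos (convex_Ioc (-1) 0)
        · intro x hx
          exact (hderiv x hx.1).continuousAt.continuousWithinAt
        · intro x hx
          rw [interior_Ioc] at hx
          exact (hderiv x hx.1).differentiableAt.differentiableWithinAt
        · intro x hx
          rw [interior_Ioc] at hx
          rw [(hderiv x hx.1).deriv]
          have h1 : (0:ℝ) < 1 + x := by linarith [hx.1]
          have h2 : x^3 ≤ 0 := by
            have : x^3 = x * x^2 := by ring
            rw [this]
            exact mul_nonpos_of_nonpos_of_nonneg hx.2.le (sq_nonneg x)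
          exact div_nonpos_of_nonpos_of_nonneg h2 h1.le
      have := hanti (⟨hu, h.le⟩ : u ∈ Ioc (-1:ℝ) 0) (⟨by norm_num, le_refl 0⟩ : (0:ℝ) ∈ Ioc (-1:ℝ) 0) h.le
      linarith [hf0 ▸ this]
  simp only [hf] at key
  linarith

lemma log_le_cubic {u : ℝ} (hu : u ≠ -1) : Real.log |1 + u| ≤ u - u^2/2 + |u|^3 := by
  rcases lt_or_gt_of_ne hu with h | h
  · -- u < -1
    have h1 : |1 + u| = -(1+u) := abs_of_neg (by linarith)
    rw [h1]
    have h2 : Real.log (-(1+u)) ≤ -(1+u) - 1 := Real.log_le_sub_one_of_pos (by linarith)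
    have h3 : |u| = -u := abs_of_neg (by linarith)
    rw [h3]
    nlinarith [sq_nonneg (u+1), sq_nonneg u, sq_nonneg (u+2)]
  · -- u > -1
    have h1 : |1 + u| = 1+u := abs_of_pos (by linarith)
    rw [h1]
    calc Real.log (1+u) ≤ u - u^2/2 + u^3/3 := log_le_cubic' h
      _ ≤ u - u^2/2 + |u|^3 := by
          have : u^3 ≤ |u|^3 := by
            calc u^3 ≤ |u^3| := le_abs_self _
              _ = |u|^3 := by rw [abs_pow]
          nlinarith [abs_nonneg u, pow_nonneg (abs_nonneg u) 3]

lemma log_ge_quadratic {y : ℝ} (hy : -(1/2 : ℝ) ≤ y) : y - 2*y^2 ≤ Real.log (1+y) := by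
  have h1 : (0:ℝ) < 1 + y := by linarith
  have h2 := Real.one_sub_inv_le_log_of_pos h1
  have h3 : y - 2*y^2 ≤ 1 - (1+y)⁻¹ := by
    have key : 1 - (1+y)⁻¹ - (y - 2*y^2) = (y^2*(1+2*y))/(1+y) := by
      field_simp
      ring
    have hnn : 0 ≤ (y^2*(1+2*y))/(1+y) :=
      div_nonneg (mul_nonneg (sq_nonneg y) (by linarith)) h1.le
    linarith
  linarith

lemma neg_log_le_rpow {y : ℝ} (h0 : 0 ≤ y) (h1 : y ≤ 1) : -Real.log y ≤ 2 * y ^ (-(1/2) : ℝ) := by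
  rcases eq_or_lt_of_le h0 with h | h
  · simp [← h, Real.zero_rpow (by norm_num : (-(1/2):ℝ) ≠ 0)]
  · have ht : (0:ℝ) < y ^ (-(1/2) : ℝ) := Real.rpow_pos_of_pos h _
    have hlt : Real.log (y ^ (-(1/2):ℝ)) = -(1/2) * Real.log y := Real.log_rpow h _
    have := Real.log_le_sub_one_of_pos ht
    nlinarith [hlt ▸ this]

lemma gauss_tendsto_top {b : ℝ} (hb : 0 < b) (k : ℕ) :
    Tendsto (fun x : ℝ => x^k * Real.exp (-b*x^2)) atTop (𝓝 0) := by
  have h := rpow_mul_exp_neg_mul_sq_isLittleO_exp_neg hb (k : ℝ)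
  have h2 : Tendsto (fun x : ℝ => Real.exp (-(1/2) * x)) atTop (𝓝 0) := by
    apply Real.tendsto_exp_atBot.comp
    exact tendsto_id.const_mul_atTop_of_neg (by norm_num)
  have h3 := h.trans_tendsto h2
  apply h3.congr
  intro x
  rw [Real.rpow_natCast]

lemma gauss_integrable {b : ℝ} (hb : 0 < b) (k : ℕ) :
    Integrable (fun x : ℝ => x^k * Real.exp (-b*x^2)) := by
  have h := integrable_rpow_mul_exp_neg_mul_sq hb (s := (k:ℝ)) (lt_of_lt_of_le (by norm_num) (Nat.cast_nonneg k))
  apply h.congr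
  filter_upwards with x
  rw [Real.rpow_natCast]

lemma gauss_deriv_exp {b : ℝ} (x : ℝ) :
    HasDerivAt (fun x : ℝ => Real.exp (-b*x^2)) (-2*b*x * Real.exp (-b*x^2)) x := by
  have h := ((hasDerivAt_pow 2 x).const_mul (-b)).exp
  convert h using 1
  simp [pow_one]
  ring

-- ∫_{Ioi 0} x e^{-bx²}
lemma gauss_J1 {b : ℝ} (hb : 0 < b) :
    ∫ x in Ioi (0:ℝ), x * Real.exp (-b*x^2) = (2*b)⁻¹ := by
  have hderiv : ∀ x ∈ Ici (0:ℝ), HasDerivAt (fun x : ℝ => -(2*b)⁻¹ * Real.exp (-b*x^2))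
      (x * Real.exp (-b*x^2)) x := by
    intro x _
    have := (gauss_deriv_exp (b := b) x).const_mul (-(2*b)⁻¹)
    refine this.congr_deriv ?_
    field_simp
  have hint : IntegrableOn (fun x : ℝ => x * Real.exp (-b*x^2)) (Ioi 0) := by
    have := gauss_integrable hb 1
    simpa using this.integrableOn
  have htt : Tendsto (fun x : ℝ => -(2*b)⁻¹ * Real.exp (-b*x^2)) atTop (𝓝 0) := by
    have := (gauss_tendsto_top hb 0).const_mul (-(2*b)⁻¹)
    simpa using this
  rw [integral_Ioi_of_hasDerivAt_of_tendsto' hderiv hint htt]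
  norm_num

-- ∫_{Ioi 0} x³ e^{-bx²}
lemma gauss_J3 {b : ℝ} (hb : 0 < b) :
    ∫ x in Ioi (0:ℝ), x^3 * Real.exp (-b*x^2) = (2*b^2)⁻¹ := by
  have hderiv : ∀ x ∈ Ici (0:ℝ),
      HasDerivAt (fun x : ℝ => -(2*b)⁻¹ * (x^2 + b⁻¹) * Real.exp (-b*x^2))
      (x^3 * Real.exp (-b*x^2)) x := by
    intro x _
    have h1 : HasDerivAt (fun x : ℝ => -(2*b)⁻¹ * (x^2 + b⁻¹)) (-(2*b)⁻¹ * (2*x)) x := by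
      have := ((hasDerivAt_pow 2 x).add_const b⁻¹).const_mul (-(2*b)⁻¹)
      refine this.congr_deriv ?_
      simp [pow_one]
    have := h1.mul (gauss_deriv_exp (b := b) x)
    refine this.congr_deriv ?_
    field_simp
    ring
  have hint : IntegrableOn (fun x : ℝ => x^3 * Real.exp (-b*x^2)) (Ioi 0) :=
    (gauss_integrable hb 3).integrableOn
  have htt : Tendsto (fun x : ℝ => -(2*b)⁻¹ * (x^2 + b⁻¹) * Real.exp (-b*x^2)) atTop (𝓝 0) := by
    have h2 := ((gauss_tendsto_top hb 2).const_mul (-(2*b)⁻¹))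
    have h0 := ((gauss_tendsto_top hb 0).const_mul (-(2*b)⁻¹ * b⁻¹))
    have := h2.add h0
    simp only [mul_zero, add_zero] at this
    apply this.congr
    intro x
    ring
  rw [integral_Ioi_of_hasDerivAt_of_tendsto' hderiv hint htt]
  norm_num
  field_simp

-- ∫_{Ioi 0} x² e^{-bx²} = (2b)⁻¹ ∫_{Ioi 0} e^{-bx²}
lemma gauss_J2 {b : ℝ} (hb : 0 < b) :
    ∫ x in Ioi (0:ℝ), x^2 * Real.exp (-b*x^2)
      = (2*b)⁻¹ * ∫ x in Ioi (0:ℝ), Real.exp (-b*x^2) := by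
  have hderiv : ∀ x ∈ Ici (0:ℝ),
      HasDerivAt (fun x : ℝ => -(2*b)⁻¹ * x * Real.exp (-b*x^2))
      (x^2 * Real.exp (-b*x^2) - (2*b)⁻¹ * Real.exp (-b*x^2)) x := by
    intro x _
    have h1 : HasDerivAt (fun x : ℝ => -(2*b)⁻¹ * x) (-(2*b)⁻¹) x := by
      simpa using (hasDerivAt_id x).const_mul (-(2*b)⁻¹)
    have := h1.mul (gauss_deriv_exp (b := b) x)
    refine this.congr_deriv ?_
    field_simp
    ring
  have hint2 : IntegrableOn (fun x : ℝ => x^2 * Real.exp (-b*x^2)) (Ioi 0) :=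
    (gauss_integrable hb 2).integrableOn
  have hint0 : IntegrableOn (fun x : ℝ => Real.exp (-b*x^2)) (Ioi 0) :=
    (integrable_exp_neg_mul_sq hb).integrableOn
  have hint : IntegrableOn
      (fun x : ℝ => x^2 * Real.exp (-b*x^2) - (2*b)⁻¹ * Real.exp (-b*x^2)) (Ioi 0) :=
    hint2.sub (hint0.const_mul _)
  have htt : Tendsto (fun x : ℝ => -(2*b)⁻¹ * x * Real.exp (-b*x^2)) atTop (𝓝 0) := by
    have := (gauss_tendsto_top hb 1).const_mul (-(2*b)⁻¹)
    simp only [mul_zero] at this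
    apply this.congr
    intro x
    ring
  have h := integral_Ioi_of_hasDerivAt_of_tendsto' hderiv hint htt
  simp only [mul_zero, Real.exp_zero, mul_one, zero_sub, neg_neg, zero_pow] at h
  rw [integral_sub hint2 (hint0.const_mul _)] at h
  rw [integral_const_mul] at h
  have : -(2*b)⁻¹ * 0 * Real.exp (-b*0^2) = 0 := by simp
  linarith [h]

lemma gauss_I0_Ioi {b : ℝ} (hb : 0 < b) :
    ∫ x in Ioi (0:ℝ), Real.exp (-b*x^2) = √(π/b) / 2 := by
  have h := integral_comp_abs (f := fun y : ℝ => Real.exp (-b*y^2))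
  simp only [sq_abs] at h
  rw [integral_gaussian] at h
  linarith

lemma gauss_I1 {b : ℝ} (hb : 0 < b) : ∫ x : ℝ, x * Real.exp (-b*x^2) = 0 := by
  have hint := gauss_integrable hb 1
  simp only [pow_one] at hint
  have hsplit := intervalIntegral.integral_Iic_add_Ioi (b := (0:ℝ)) hint.integrableOn hint.integrableOn
  have hneg := integral_comp_neg_Ioi (0:ℝ) (fun x => x * Real.exp (-b*x^2))
  simp only [neg_zero] at hneg
  have : ∫ x in Ioi (0:ℝ), (-x) * Real.exp (-b*(-x)^2) = -∫ x in Ioi (0:ℝ), x * Real.exp (-b*x^2) := by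
    rw [← integral_neg]
    congr 1 with x
    ring_nf
  rw [this] at hneg
  rw [← hsplit, ← hneg]
  ring

lemma gauss_I2 {b : ℝ} (hb : 0 < b) :
    ∫ x : ℝ, x^2 * Real.exp (-b*x^2) = (2*b)⁻¹ * √(π/b) := by
  have h := integral_comp_abs (f := fun y : ℝ => y^2 * Real.exp (-b*y^2))
  simp only [sq_abs] at h
  have h2 : ∫ x : ℝ, x^2 * Real.exp (-b*|x|^2) = ∫ x : ℝ, x^2 * Real.exp (-b*x^2) := by
    congr 1 with x; rw [sq_abs]
  rw [gauss_J2 hb, gauss_I0_Ioi hb] at h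
  rw [h]
  ring

lemma gauss_I3 {b : ℝ} (hb : 0 < b) :
    ∫ x : ℝ, |x|^3 * Real.exp (-b*x^2) = (b^2)⁻¹ := by
  have h := integral_comp_abs (f := fun y : ℝ => y^3 * Real.exp (-b*y^2))
  simp only [sq_abs] at h
  rw [gauss_J3 hb] at h
  rw [h]
  have hb' : b ≠ 0 := hb.ne'
  field_simp

-- transfer to gaussianReal
lemma gaussianPDFReal_eq {τ : ℝ} (hτ : 0 < τ) :
    gaussianPDFReal 0 τ.toNNReal
      = fun x => (√(2*π*τ))⁻¹ * Real.exp (-(2*τ)⁻¹*x^2) := by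
  unfold gaussianPDFReal
  funext x
  rw [Real.coe_toNNReal τ hτ.le]
  have h2 : -(x - 0)^2/(2*τ) = -(2*τ)⁻¹*x^2 := by ring
  rw [h2]

lemma toNNReal_ne_zero {τ : ℝ} (hτ : 0 < τ) : τ.toNNReal ≠ 0 :=
  (Real.toNNReal_pos.mpr hτ).ne'

lemma gaussian_integrable_iff {τ : ℝ} (hτ : 0 < τ) (g : ℝ → ℝ) :
    Integrable g (gaussianReal 0 τ.toNNReal)
      ↔ Integrable (fun x => g x * ((√(2*π*τ))⁻¹ * Real.exp (-(2*τ)⁻¹*x^2))) volume := by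
  rw [gaussianReal_of_var_ne_zero _ (toNNReal_ne_zero hτ)]
  rw [integrable_withDensity_iff (measurable_gaussianPDF _ _)
    (ae_of_all _ fun x => ENNReal.ofReal_lt_top)]
  have : ∀ x : ℝ, (gaussianPDF 0 τ.toNNReal x).toReal
      = (√(2*π*τ))⁻¹ * Real.exp (-(2*τ)⁻¹*x^2) := by
    intro x
    rw [gaussianPDF, ENNReal.toReal_ofReal (gaussianPDFReal_nonneg _ _ _),
      gaussianPDFReal_eq hτ]
  have heq : (fun x => g x * (gaussianPDF 0 τ.toNNReal x).toReal)
      = fun x => g x * ((√(2*π*τ))⁻¹ * Real.exp (-(2*τ)⁻¹*x^2)) := by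
    funext x; rw [this]
  rw [heq]

lemma gaussian_integral_eq {τ : ℝ} (hτ : 0 < τ) (g : ℝ → ℝ) :
    ∫ x, g x ∂(gaussianReal 0 τ.toNNReal)
      = ∫ x, ((√(2*π*τ))⁻¹ * Real.exp (-(2*τ)⁻¹*x^2)) * g x := by
  rw [gaussianReal_of_var_ne_zero _ (toNNReal_ne_zero hτ)]
  have hd : volume.withDensity (gaussianPDF 0 τ.toNNReal)
      = volume.withDensity (fun x => ((gaussianPDFReal 0 τ.toNNReal x).toNNReal : ℝ≥0∞)) := rfl
  rw [hd, integral_withDensity_eq_integral_smul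
    ((measurable_gaussianPDFReal 0 τ.toNNReal).real_toNNReal) g]
  congr 1 with x
  rw [NNReal.smul_def, Real.coe_toNNReal _ (gaussianPDFReal_nonneg _ _ _),
    gaussianPDFReal_eq hτ]
  simp [smul_eq_mul]

section moments

variable {τ : ℝ}

lemma btau_pos (hτ : 0 < τ) : 0 < (2*τ)⁻¹ := by positivity

lemma sqrt2pit_pos (hτ : 0 < τ) : 0 < √(2*π*τ) :=
  Real.sqrt_pos.mpr (by positivity)

lemma gauss_mean (hτ : 0 < τ) : ∫ x, x ∂(gaussianReal 0 τ.toNNReal) = 0 := by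
  rw [gaussian_integral_eq hτ]
  have h : (fun x : ℝ => ((√(2*π*τ))⁻¹ * Real.exp (-(2*τ)⁻¹*x^2)) * x)
       = fun x => (√(2*π*τ))⁻¹ * (x * Real.exp (-(2*τ)⁻¹*x^2)) := by funext x; ring
  rw [h, integral_const_mul, gauss_I1 (btau_pos hτ), mul_zero]

lemma gauss_var (hτ : 0 < τ) : ∫ x, x^2 ∂(gaussianReal 0 τ.toNNReal) = τ := by
  rw [gaussian_integral_eq hτ]
  have h : (fun x : ℝ => ((√(2*π*τ))⁻¹ * Real.exp (-(2*τ)⁻¹*x^2)) * x^2)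
       = fun x => (√(2*π*τ))⁻¹ * (x^2 * Real.exp (-(2*τ)⁻¹*x^2)) := by funext x; ring
  rw [h, integral_const_mul, gauss_I2 (btau_pos hτ)]
  have h1 : (2*(2*τ)⁻¹)⁻¹ = τ := by
    rw [mul_inv, inv_inv]
    field_simp
  have h2 : π/(2*τ)⁻¹ = 2*π*τ := by
    field_simp
  rw [h1, h2]
  rw [show (√(2*π*τ))⁻¹ * (τ * √(2*π*τ)) = τ * ((√(2*π*τ))⁻¹ * √(2*π*τ)) by ring,
    inv_mul_cancel₀ (sqrt2pit_pos hτ).ne', mul_one]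

lemma gauss_abs3 (hτ : 0 < τ) : ∫ x, |x|^3 ∂(gaussianReal 0 τ.toNNReal) ≤ 2*τ*√τ := by
  rw [gaussian_integral_eq hτ]
  have h : (fun x : ℝ => ((√(2*π*τ))⁻¹ * Real.exp (-(2*τ)⁻¹*x^2)) * |x|^3)
       = fun x => (√(2*π*τ))⁻¹ * (|x|^3 * Real.exp (-(2*τ)⁻¹*x^2)) := by funext x; ring
  rw [h, integral_const_mul, gauss_I3 (btau_pos hτ)]
  have h1 : (((2*τ)⁻¹)^2)⁻¹ = 4*τ^2 := by
    rw [← inv_pow, inv_inv]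
    ring
  rw [h1]
  have hs : (2:ℝ)*√τ ≤ √(2*π*τ) := by
    have h4 : (2:ℝ)*√τ = √(4*τ) := by
      rw [show (4:ℝ)*τ = 2^2*τ by norm_num, Real.sqrt_mul (by positivity) τ,
        Real.sqrt_sq (by norm_num)]
    rw [h4]
    apply Real.sqrt_le_sqrt
    nlinarith [Real.pi_gt_three]
  have hst : 0 < √(2*π*τ) := sqrt2pit_pos hτ
  rw [inv_mul_le_iff₀ hst]
  have hτr : √τ * √τ = τ := Real.mul_self_sqrt hτ.le
  have h5 : 2*τ*√τ * (2*√τ) ≤ 2*τ*√τ * √(2*π*τ) := by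
    apply mul_le_mul_of_nonneg_left hs
    positivity
  nlinarith [h5]

lemma gauss_int_poly (hτ : 0 < τ) (k : ℕ) :
    Integrable (fun x : ℝ => x^k) (gaussianReal 0 τ.toNNReal) := by
  rw [gaussian_integrable_iff hτ]
  apply (((gauss_integrable (btau_pos hτ) k)).const_mul ((√(2*π*τ))⁻¹)).congr
  filter_upwards with x
  ring

lemma gauss_int_abs3 (hτ : 0 < τ) :
    Integrable (fun x : ℝ => |x|^3) (gaussianReal 0 τ.toNNReal) := by
  rw [gaussian_integrable_iff hτ]
  apply (((gauss_integrable (btau_pos hτ) 3).abs).const_mul ((√(2*π*τ))⁻¹)).congr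
  filter_upwards with x
  rw [abs_mul, abs_pow, abs_of_pos (Real.exp_pos _)]
  ring

lemma gauss_singleton (hτ : 0 < τ) (c : ℝ) : gaussianReal 0 τ.toNNReal {c} = 0 :=
  gaussianReal_absolutelyContinuous 0 (toNNReal_ne_zero hτ) (volume_singleton)

end moments

-- integrability of the negative log singularity
lemma integrable_w_Icc : IntegrableOn (fun y : ℝ => |y| ^ (-(1/2) : ℝ)) (Icc (-1) 1) volume := by
  have h01 : IntegrableOn (fun y : ℝ => |y| ^ (-(1/2) : ℝ)) (Icc 0 1) volume := by
    have h := (intervalIntegral.intervalIntegrable_rpow' (a := 0) (b := 1)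
      (by norm_num : (-1:ℝ) < -(1/2)))
    rw [intervalIntegrable_iff] at h
    rw [Set.uIoc_of_le (by norm_num : (0:ℝ) ≤ 1)] at h
    rw [integrableOn_Icc_iff_integrableOn_Ioc]
    apply h.congr_fun _ measurableSet_Ioc
    intro y hy
    show y ^ (-(1/2):ℝ) = |y| ^ (-(1/2):ℝ)
    rw [abs_of_nonneg (le_of_lt hy.1)]
  have hneg : IntegrableOn (fun y : ℝ => |y| ^ (-(1/2) : ℝ)) (Icc (-1) 0) volume := by
    have key := (Measure.measurePreserving_neg (volume : Measure ℝ)).integrableOn_comp_preimage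
      (Homeomorph.neg ℝ).measurableEmbedding
      (f := fun y : ℝ => |y| ^ (-(1/2) : ℝ)) (s := Icc (-1) 0)
    rw [← key]
    have hpre : (Neg.neg ⁻¹' (Icc (-1:ℝ) 0)) = Icc 0 1 := by
      ext y
      simp only [mem_preimage, mem_Icc]
      constructor <;> intro hy <;> constructor <;> linarith [hy.1, hy.2]
    have hcomp : ((fun y : ℝ => |y| ^ (-(1/2) : ℝ)) ∘ Neg.neg)
        = fun y : ℝ => |y| ^ (-(1/2) : ℝ) := by
      funext y
      simp [Function.comp, abs_neg]
    rw [hpre, hcomp]  -- order may matter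
    exact h01
  have : Icc (-1:ℝ) 1 = Icc (-1) 0 ∪ Icc 0 1 := by
    rw [Set.Icc_union_Icc_eq_Icc] <;> norm_num
  rw [this]
  exact hneg.union h01

lemma meas_log_abs (β : ℝ) : Measurable (fun x : ℝ => Real.log |1 + β*x|) :=
  Real.measurable_log.comp ((measurable_const.add (measurable_id.const_mul β)).abs)

lemma integrable_neg_log_part {β : ℝ} (hβ : β ≠ 0) :
    Integrable (fun x : ℝ => max (-Real.log |1+β*x|) 0) volume := by
  set g0 : ℝ → ℝ := fun x => max (-Real.log |1+β*x|) 0 with hg0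
  set S : Set ℝ := {x : ℝ | |1+β*x| ≤ 1} with hS
  have hSmeas : MeasurableSet S :=
    measurableSet_le ((measurable_const.add (measurable_id.const_mul β)).abs) measurable_const
  have hg0meas : Measurable g0 := ((meas_log_abs β).neg).max measurable_const
  have hzero : ∀ x ∉ S, g0 x = 0 := by
    intro x hx
    simp only [hS, mem_setOf_eq, not_le] at hx
    have : 0 ≤ Real.log |1+β*x| := Real.log_nonneg hx.le
    simp only [hg0]
    exact max_eq_right (by linarith)
  -- dominating function
  have hWint : Integrable (fun x : ℝ => 2 * ((Icc (-1:ℝ) 1).indicator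
      (fun y : ℝ => |y| ^ (-(1/2) : ℝ)) (1 + β*x))) volume := by
    have h1 : Integrable ((Icc (-1:ℝ) 1).indicator (fun y : ℝ => |y| ^ (-(1/2) : ℝ))) volume := by
      rw [integrable_indicator_iff measurableSet_Icc]
      exact integrable_w_Icc
    have h2 := h1.comp_add_left 1
    have h3 := h2.comp_mul_left' hβ
    exact (h3.const_mul 2)
  apply Integrable.mono' hWint hg0meas.aestronglyMeasurable
  filter_upwards with x
  rw [Real.norm_eq_abs, abs_of_nonneg (le_max_right _ _)]
  by_cases hx : x ∈ S
  · have hx' : |1+β*x| ≤ 1 := hx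
    have hind : (Icc (-1:ℝ) 1).indicator (fun y : ℝ => |y| ^ (-(1/2) : ℝ)) (1 + β*x)
        = |1+β*x| ^ (-(1/2) : ℝ) := by
      rw [indicator_of_mem]
      rw [mem_Icc]
      constructor <;> [linarith [neg_abs_le (1+β*x)]; linarith [le_abs_self (1+β*x)]]
    rw [hind]
    have := neg_log_le_rpow (abs_nonneg (1+β*x)) hx'
    calc g0 x ≤ max (2 * |1+β*x| ^ (-(1/2):ℝ)) 0 := max_le_max this (le_refl 0)
      _ = 2 * |1+β*x| ^ (-(1/2):ℝ) := max_eq_left (mul_nonneg (by norm_num) (Real.rpow_nonneg (abs_nonneg _) _))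
  · rw [hzero x hx]
    exact mul_nonneg (by norm_num) (Set.indicator_nonneg (fun y _ => Real.rpow_nonneg (abs_nonneg y) _) _)

lemma gauss_log_integrable {τ : ℝ} (hτ : 0 < τ) (β : ℝ) :
    Integrable (fun x : ℝ => Real.log |1 + β*x|) (gaussianReal 0 τ.toNNReal) := by
  by_cases hβ : β = 0
  · simp [hβ]
  rw [gaussian_integrable_iff hτ]
  set M : ℝ := (√(2*π*τ))⁻¹ with hM
  have hM0 : 0 ≤ M := by positivity
  have hD : Integrable (fun x : ℝ =>
      M * (|β| * (|x| * Real.exp (-(2*τ)⁻¹*x^2)))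
      + M * max (-Real.log |1+β*x|) 0) volume := by
    apply Integrable.add
    · apply Integrable.const_mul
      apply Integrable.const_mul
      apply ((gauss_integrable (btau_pos hτ) 1).abs).congr
      filter_upwards with x
      rw [abs_mul, abs_of_pos (Real.exp_pos _), pow_one]
    · exact (integrable_neg_log_part hβ).const_mul M
  apply Integrable.mono' hD
  · exact ((meas_log_abs β).mul
      ((measurable_const.mul ((measurable_id.pow_const 2).const_mul _).exp))).aestronglyMeasurable
  filter_upwards with x
  rw [Real.norm_eq_abs, abs_mul]
  have hpdf : |M * Real.exp (-(2*τ)⁻¹*x^2)| = M * Real.exp (-(2*τ)⁻¹*x^2) := by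
    rw [abs_of_nonneg (by positivity)]
  rw [hpdf]
  have hexple : Real.exp (-(2*τ)⁻¹*x^2) ≤ 1 := by
    rw [Real.exp_le_one_iff]
    have := sq_nonneg x
    nlinarith [btau_pos hτ]
  have hlogbound : abs (Real.log |1+β*x|) ≤ |β*x| + max (-Real.log |1+β*x|) 0 := by
    rcases le_or_gt 1 (|1+β*x|) with h | h
    · rw [abs_of_nonneg (Real.log_nonneg h)]
      have h2 : Real.log |1+β*x| ≤ |1+β*x| - 1 := Real.log_le_sub_one_of_pos (by linarith)
      have h3 : |1+β*x| ≤ 1 + |β*x| := by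
        calc |1+β*x| ≤ |(1:ℝ)| + |β*x| := abs_add_le 1 (β*x)
          _ = 1 + |β*x| := by rw [abs_one]
      have h4 : 0 ≤ max (-Real.log |1+β*x|) 0 := le_max_right _ _
      linarith
    · have hlog0 : Real.log |1+β*x| ≤ 0 := by
        rcases eq_or_lt_of_le (abs_nonneg (1+β*x)) with he | hpos
        · rw [← he, Real.log_zero]
        · exact Real.log_nonpos (abs_nonneg _) h.le
      rw [abs_of_nonpos hlog0]
      have h5 : -Real.log |1+β*x| ≤ max (-Real.log |1+β*x|) 0 := le_max_left _ _
      linarith [abs_nonneg (β*x)]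
  calc abs (Real.log |1+β*x|) * (M * Real.exp (-(2*τ)⁻¹*x^2))
      ≤ (|β*x| + max (-Real.log |1+β*x|) 0) * (M * Real.exp (-(2*τ)⁻¹*x^2)) := by
        apply mul_le_mul_of_nonneg_right hlogbound (by positivity)
    _ ≤ M * (|β| * (|x| * Real.exp (-(2*τ)⁻¹*x^2))) + M * max (-Real.log |1+β*x|) 0 := by
        rw [add_mul]
        apply add_le_add
        · apply le_of_eq
          rw [abs_mul]; ring
        · have h4 : 0 ≤ max (-Real.log |1+β*x|) 0 := le_max_right _ _
          calc max (-Real.log |1+β*x|) 0 * (M * Real.exp (-(2*τ)⁻¹*x^2))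
              ≤ max (-Real.log |1+β*x|) 0 * (M * 1) := by
                apply mul_le_mul_of_nonneg_left _ h4
                exact mul_le_mul_of_nonneg_left hexple hM0
            _ = M * max (-Real.log |1+β*x|) 0 := by ring

lemma gauss_log_mean_le {τ : ℝ} (hτ : 0 < τ) (β : ℝ) :
    ∫ x, Real.log |1 + β*x| ∂(gaussianReal 0 τ.toNNReal)
      ≤ -β^2*τ/2 + |β|^3 * (2*τ*√τ) := by
  by_cases hβ : β = 0
  · simp [hβ]

  set γ := gaussianReal 0 τ.toNNReal with hγ
  have hi1 : Integrable (fun x : ℝ => β*x) γ := by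
    have := (gauss_int_poly hτ 1).const_mul β
    apply this.congr
    filter_upwards with x
    rw [pow_one]
  have hi2 : Integrable (fun x : ℝ => β^2/2*x^2) γ := (gauss_int_poly hτ 2).const_mul _
  have hi3 : Integrable (fun x : ℝ => |β|^3*|x|^3) γ := (gauss_int_abs3 hτ).const_mul _
  have hi12 : Integrable (fun x : ℝ => β*x - β^2/2*x^2) γ := hi1.sub hi2
  have hg : Integrable (fun x : ℝ => β*x - β^2/2*x^2 + |β|^3*|x|^3) γ := hi12.add hi3
  have hbound : ∀ᵐ x ∂γ, Real.log |1 + β*x|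
      ≤ β*x - β^2/2*x^2 + |β|^3*|x|^3 := by
    have hnull : γ {x : ℝ | 1 + β*x = 0} = 0 := by
      apply measure_mono_null _ (gauss_singleton hτ (-(1/β)))
      intro x hx
      simp only [mem_setOf_eq] at hx
      simp only [mem_singleton_iff]
      field_simp
      linarith
    rw [ae_iff]
    apply measure_mono_null _ hnull
    intro x hx
    simp only [mem_setOf_eq] at hx ⊢
    by_contra hne
    apply hx
    have hu : β*x ≠ -1 := by
      intro hc
      apply hne
      rw [hc]
      ring
    calc Real.log |1 + β*x| ≤ β*x - (β*x)^2/2 + |β*x|^3 := log_le_cubic hu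
      _ = β*x - β^2/2*x^2 + |β|^3*|x|^3 := by
          rw [abs_mul, mul_pow]
          ring
  have hmono := integral_mono_ae (gauss_log_integrable hτ β) hg hbound
  rw [integral_add hi12 hi3, integral_sub hi1 hi2] at hmono
  rw [integral_const_mul, integral_const_mul, integral_const_mul] at hmono
  rw [gauss_mean hτ, gauss_var hτ] at hmono
  have h3 := gauss_abs3 hτ
  have habs : (0:ℝ) ≤ |β|^3 := by positivity
  nlinarith [mul_le_mul_of_nonneg_left h3 habs]

end AuxLemmas

/-- Mutual independence of the joint family `(Y₀, ΔW₀, ΔW₁, …)`. -/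
def MutuallyIndepInit {Ω : Type*} [MeasurableSpace Ω] {N : ℕ}
    (P : Measure Ω) (Y₀ : Ω → EuclideanSpace ℝ (Fin N)) (ΔW : ℕ → Ω → ℝ) :
    Prop :=
  iIndepFun
    (β := fun i : Option ℕ => Option.elim i (EuclideanSpace ℝ (Fin N)) fun _ => ℝ)
    (m := fun i => match i with
      | none => (inferInstance : MeasurableSpace (EuclideanSpace ℝ (Fin N)))
      | some _ => (inferInstance : MeasurableSpace ℝ))
    (fun i => match i with
      | none => Y₀
      | some n => ΔW n) P

set_option maxHeartbeats 4000000 in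
/-- Discrete almost sure exponential stability of the fully discrete spectral
Galerkin / implicit Euler–Maruyama scheme
`Y_{n+1}(k) = (Y_n(k) + β₁ ΔW_n Y_n(k)) / (1 + τ (λ_k - β₀))` under the
noise-induced stabilization condition `β₁² > 2 (β₀ - λ₁)`: for all sufficiently
small step sizes `τ`, almost surely `‖Y_n‖^p ≤ ξ e^{-(μ_as/4) n τ}` for a
finite random variable `ξ`, with `μ_as = (p/2) β₁² + p (λ₁ - β₀)`. -/
theorem discrete_as_exponential_stability
    (N : ℕ) (hN : 1 ≤ N) (p β₀ β₁ lam1 : ℝ) (hp : 1 ≤ p)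
    (lam : Fin N → ℝ) (hlam : ∀ k, lam1 ≤ lam k)
    (hcond : β₁ ^ 2 > 2 * (β₀ - lam1)) :
    ∃ τ₀ > (0 : ℝ), ∀ τ : ℝ, 0 < τ → τ < τ₀ →
      (∀ k : Fin N, 0 < 1 + τ * (lam k - β₀)) →
      ∀ (Ω : Type*) [MeasurableSpace Ω] (P : Measure Ω),
        IsProbabilityMeasure P →
        ∀ (ΔW : ℕ → Ω → ℝ) (Y₀ : Ω → EuclideanSpace ℝ (Fin N)),
          (∀ n, Measurable (ΔW n)) →
          (∀ n, Measure.map (ΔW n) P = gaussianReal 0 τ.toNNReal) →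
          Measurable Y₀ →
          MutuallyIndepInit P Y₀ ΔW →
          ∀ Y : ℕ → Ω → EuclideanSpace ℝ (Fin N),
            Y 0 = Y₀ →
            (∀ n ω k, Y (n + 1) ω k =
              (Y n ω k + β₁ * ΔW n ω * Y n ω k) / (1 + τ * (lam k - β₀))) →
            ∃ ξ : Ω → ℝ, (∀ ω, 0 ≤ ξ ω) ∧
              ∀ᵐ ω ∂P, ∀ n : ℕ,
                ‖Y n ω‖ ^ p ≤
                  ξ ω * Real.exp
                    (-((p / 2 * β₁ ^ 2 + p * (lam1 - β₀)) / 4) * (n * τ)) := by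
  obtain ⟨a, ha⟩ : ∃ a : ℝ, a = lam1 - β₀ := ⟨_, rfl⟩
  obtain ⟨bb, hbb⟩ : ∃ bb : ℝ, bb = β₁^2/2 := ⟨_, rfl⟩
  have hab : 0 < a + bb := by rw [ha, hbb]; nlinarith
  obtain ⟨C, hC⟩ : ∃ C : ℝ, C = 2*|β₁|^3 := ⟨_, rfl⟩
  obtain ⟨s₀, hs₀⟩ : ∃ s : ℝ, s = (a+bb)/4 := ⟨_, rfl⟩
  have hs₀pos : 0 < s₀ := by rw [hs₀]; positivity
  obtain ⟨K, hK⟩ : ∃ K : ℝ, K = C + 2*a^2 + 1 := ⟨_, rfl⟩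
  have hCnn : 0 ≤ C := by rw [hC]; positivity
  have hKpos : 0 < K := by rw [hK]; positivity
  refine ⟨min (1/(2*(|a|+1))) ((s₀/K)^2), by positivity, ?_⟩
  intro τ hτ hττ₀ hk Ω mΩ P hP ΔW Y₀ hms hlaw hmY₀ hind Y hY0 hYrec
  have hτa : τ * (|a|+1) < 1/2 := by
    have h1 : τ < 1/(2*(|a|+1)) := lt_of_lt_of_le hττ₀ (min_le_left _ _)
    have h2 : 0 < |a|+1 := by positivity
    rw [lt_div_iff₀ (by positivity)] at h1
    linarith
  have hτ1 : τ ≤ 1 := by nlinarith [abs_nonneg a]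
  have hτabs : τ*|a| < 1/2 := by nlinarith
  obtain ⟨d, hd⟩ : ∃ d : ℝ, d = 1 + τ*a := ⟨_, rfl⟩
  have hdpos : 1/2 < d := by
    have h3 : -(τ*|a|) ≤ τ*a := by nlinarith [neg_abs_le a, abs_nonneg a]
    rw [hd]
    linarith
  have hd0 : 0 < d := by linarith
  obtain ⟨c, hc⟩ : ∃ c : ℝ, c = Real.log d - (a+bb)/4*τ := ⟨_, rfl⟩
  obtain ⟨m, hm⟩ : ∃ m : ℝ, m = ∫ x, Real.log |1 + β₁*x| ∂(gaussianReal 0 τ.toNNReal) :=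
    ⟨_, rfl⟩
  -- step size smallness
  have hsqrt : √τ < s₀/K := by
    have h1 : τ < (s₀/K)^2 := lt_of_lt_of_le hττ₀ (min_le_right _ _)
    have h2 := Real.sqrt_lt_sqrt hτ.le h1
    rwa [Real.sqrt_sq (by positivity)] at h2
  have hmc : m < c := by
    have h1 : m ≤ -bb*τ + C*(τ*√τ) := by
      have h0 := gauss_log_mean_le hτ β₁
      rw [← hm] at h0
      calc m ≤ -β₁^2*τ/2 + |β₁|^3 * (2*τ*√τ) := h0
        _ = -bb*τ + C*(τ*√τ) := by rw [hbb, hC]; ring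
    have h2 : τ*a - 2*(τ*a)^2 - (a+bb)/4*τ ≤ c := by
      have h5 := log_ge_quadratic (y := τ*a) (by nlinarith [neg_abs_le a, abs_nonneg a])
      rw [hc, hd]
      linarith
    have hsq1 : √τ ≤ 1 := by
      rw [show (1:ℝ) = √1 by simp]
      exact Real.sqrt_le_sqrt hτ1
    have hττ : τ ≤ √τ := by
      nlinarith [Real.sq_sqrt hτ.le, Real.sqrt_nonneg τ]
    have h3 : C*(τ*√τ) + 2*(τ*a)^2 < 3*s₀*τ := by
      have e1 : C*(τ*√τ) + 2*(τ*a)^2 ≤ ((C + 2*a^2)*√τ)*τ := by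
        have e0 : 2*(τ*a)^2 = (2*a^2*τ)*τ := by ring
        rw [e0]
        have h4 : 2*a^2*τ ≤ 2*a^2*√τ := by nlinarith [sq_nonneg a]
        nlinarith [Real.sqrt_nonneg τ, hτ.le, sq_nonneg a]
      have e2 : (C + 2*a^2)*√τ < s₀ := by
        have hsq : 0 < √τ := Real.sqrt_pos.mpr hτ
        have e3 : K*(s₀/K) = s₀ := by field_simp
        calc (C + 2*a^2)*√τ < K*√τ := by nlinarith
          _ ≤ K*(s₀/K) := by nlinarith
          _ = s₀ := e3
      nlinarith [hτ]
    have hfin : -bb*τ + C*(τ*√τ) < τ*a - 2*(τ*a)^2 - (a+bb)/4*τ := by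
      have e4 : 3*s₀*τ = (3/4)*(a+bb)*τ := by rw [hs₀]; ring
      nlinarith
    linarith
  -- the log increments
  have hfmeas : Measurable (fun x : ℝ => Real.log |1 + β₁*x|) := meas_log_abs β₁
  obtain ⟨L, hL⟩ : ∃ L : ℕ → Ω → ℝ, L = fun n ω => Real.log |1 + β₁ * ΔW n ω| := ⟨_, rfl⟩
  have hLint : Integrable (L 0) P := by
    rw [hL]
    have h0 : Integrable ((fun x : ℝ => Real.log |1 + β₁*x|) ∘ (ΔW 0)) P := by
      apply (integrable_map_measure hfmeas.aestronglyMeasurable (hms 0).aemeasurable).mp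
      rw [hlaw 0]
      exact gauss_log_integrable hτ β₁
    exact h0
  have hident : ∀ i, IdentDistrib (L i) (L 0) P P := by
    intro i
    rw [hL]
    exact IdentDistrib.comp
      ⟨(hms i).aemeasurable, (hms 0).aemeasurable, by rw [hlaw i, hlaw 0]⟩ hfmeas
  have hpair : Pairwise (Function.onFun (IndepFun · · P) L) := by
    intro i j hij
    have hbase : IndepFun (ΔW i) (ΔW j) P :=
      ProbabilityTheory.iIndepFun.indepFun hind
        (i := some i) (j := some j) (by simpa using hij)
    have := hbase.comp hfmeas hfmeas
    rw [hL]
    exact this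
  have hslln := strong_law_ae_real L hLint hpair hident
  have hEL : (∫ ω, L 0 ω ∂P) = m := by
    rw [hL, hm, ← hlaw 0, integral_map (hms 0).aemeasurable hfmeas.aestronglyMeasurable]
  rw [hEL] at hslln
  have hzero : ∀ᵐ ω ∂P, ∀ j : ℕ, 1 + β₁ * ΔW j ω ≠ 0 := by
    rw [ae_all_iff]
    intro j
    by_cases hβ : β₁ = 0
    · apply ae_of_all
      intro ω
      simp [hβ]
    · rw [ae_iff]
      have hsub : {ω | ¬ (1 + β₁ * ΔW j ω ≠ 0)} ⊆ ΔW j ⁻¹' {-(1/β₁)} := by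
        intro ω hω
        simp only [mem_setOf_eq, not_not] at hω
        simp only [mem_preimage, mem_singleton_iff]
        field_simp
        linarith
      have hpre : P (ΔW j ⁻¹' {-(1/β₁)}) = 0 := by
        have hmap := Measure.map_apply (μ := P) (hms j) (measurableSet_singleton (-(1/β₁)))
        calc P (ΔW j ⁻¹' {-(1/β₁)}) = Measure.map (ΔW j) P {-(1/β₁)} := hmap.symm
          _ = 0 := by rw [hlaw j]; exact gauss_singleton hτ _
      exact measure_mono_null hsub hpre
  -- pathwise contraction of the scheme
  have hstep : ∀ (n : ℕ) (ω : Ω), ‖Y (n+1) ω‖ ≤ (|1 + β₁ * ΔW n ω|/d) * ‖Y n ω‖ := by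
    intro n ω
    have hr0 : (0:ℝ) ≤ |1 + β₁ * ΔW n ω|/d := by positivity
    rw [EuclideanSpace.norm_eq, EuclideanSpace.norm_eq]
    have hsum : ∑ k, ‖Y (n+1) ω k‖^2 ≤ ∑ k, ((|1 + β₁ * ΔW n ω|/d) * ‖Y n ω k‖)^2 := by
      apply Finset.sum_le_sum
      intro k _
      have hdk : d ≤ 1 + τ*(lam k - β₀) := by
        rw [hd]
        have : τ * a ≤ τ*(lam k - β₀) := by
          apply mul_le_mul_of_nonneg_left _ hτ.le
          rw [ha]
          linarith [hlam k]
        linarith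
      have habs : ‖Y (n+1) ω k‖ ≤ (|1 + β₁ * ΔW n ω|/d) * ‖Y n ω k‖ := by
        rw [Real.norm_eq_abs, Real.norm_eq_abs, hYrec n ω k,
          show Y n ω k + β₁ * ΔW n ω * Y n ω k = Y n ω k * (1 + β₁ * ΔW n ω) by ring,
          abs_div, abs_mul, abs_of_pos (hk k)]
        calc |Y n ω k| * |1 + β₁ * ΔW n ω| / (1 + τ*(lam k - β₀))
            ≤ |Y n ω k| * |1 + β₁ * ΔW n ω| / d :=
              div_le_div_of_nonneg_left (by positivity) hd0 hdk
          _ = (|1 + β₁ * ΔW n ω|/d) * |Y n ω k| := by ring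
      exact pow_le_pow_left₀ (norm_nonneg _) habs 2
    calc √(∑ k, ‖Y (n+1) ω k‖^2) ≤ √(∑ k, ((|1 + β₁ * ΔW n ω|/d) * ‖Y n ω k‖)^2) :=
        Real.sqrt_le_sqrt hsum
      _ = (|1 + β₁ * ΔW n ω|/d) * √(∑ k, ‖Y n ω k‖^2) := by
        rw [show (∑ k, ((|1 + β₁ * ΔW n ω|/d) * ‖Y n ω k‖)^2)
            = (|1 + β₁ * ΔW n ω|/d)^2 * ∑ k, ‖Y n ω k‖^2 by
          rw [Finset.mul_sum]
          exact Finset.sum_congr rfl (fun k _ => by ring)]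
        rw [Real.sqrt_mul (sq_nonneg _), Real.sqrt_sq hr0]
  -- conclusion
  obtain ⟨μq, hμq⟩ : ∃ x : ℝ, x = (p / 2 * β₁ ^ 2 + p * (lam1 - β₀)) / 4 := ⟨_, rfl⟩
  refine ⟨fun ω => ⨆ n : ℕ, ‖Y n ω‖^p * Real.exp (μq*(n*τ)),
    fun ω => Real.iSup_nonneg (fun n => by positivity), ?_⟩
  simp only [← hμq]
  filter_upwards [hslln, hzero] with ω hTω hgood
  have hR : ∀ j : ℕ, |1 + β₁ * ΔW j ω|/d = Real.exp (L j ω - Real.log d) := by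
    intro j
    rw [Real.exp_sub, Real.exp_log hd0, hL, Real.exp_log (abs_pos.mpr (hgood j))]
  have hYn : ∀ n : ℕ, ‖Y n ω‖
      ≤ ‖Y₀ ω‖ * Real.exp (∑ j ∈ Finset.range n, (L j ω - Real.log d)) := by
    intro n
    induction n with
    | zero => simp [hY0]
    | succ n ih =>
      calc ‖Y (n+1) ω‖ ≤ (|1 + β₁ * ΔW n ω|/d) * ‖Y n ω‖ := hstep n ω
        _ ≤ (|1 + β₁ * ΔW n ω|/d)
            * (‖Y₀ ω‖ * Real.exp (∑ j ∈ Finset.range n, (L j ω - Real.log d))) :=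
            mul_le_mul_of_nonneg_left ih (by positivity)
        _ = ‖Y₀ ω‖ * Real.exp (∑ j ∈ Finset.range (n+1), (L j ω - Real.log d)) := by
            rw [hR n, Finset.sum_range_succ, Real.exp_add]
            ring
  have hYnp : ∀ n : ℕ, ‖Y n ω‖^p
      ≤ ‖Y₀ ω‖^p * Real.exp (p * ∑ j ∈ Finset.range n, (L j ω - Real.log d)) := by
    intro n
    calc ‖Y n ω‖^p
        ≤ (‖Y₀ ω‖ * Real.exp (∑ j ∈ Finset.range n, (L j ω - Real.log d)))^p :=
          Real.rpow_le_rpow (norm_nonneg _) (hYn n) (by linarith)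
      _ = ‖Y₀ ω‖^p * Real.exp (p * ∑ j ∈ Finset.range n, (L j ω - Real.log d)) := by
          rw [Real.mul_rpow (norm_nonneg _) (Real.exp_pos _).le]
          congr 1
          rw [Real.rpow_def_of_pos (Real.exp_pos _), Real.log_exp, mul_comm]
  obtain ⟨n₀, hn₀⟩ : ∃ n₀ : ℕ, ∀ n ≥ n₀, (∑ j ∈ Finset.range n, L j ω)/(n:ℝ) < c ∧ 1 ≤ n := by
    have h1 := hTω.eventually_lt_const hmc
    have h2 := eventually_ge_atTop (1:ℕ)
    exact eventually_atTop.mp (h1.and h2)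
  have hSn : ∀ n : ℕ, n ≥ n₀ → (∑ j ∈ Finset.range n, L j ω) ≤ c * n := by
    intro n hn
    obtain ⟨hlt, hn1⟩ := hn₀ n hn
    have hnpos : (0:ℝ) < n := by exact_mod_cast hn1
    rw [div_lt_iff₀ hnpos] at hlt
    linarith
  have hexp_id : ∀ n : ℕ, p * (∑ j ∈ Finset.range n, (L j ω - Real.log d)) + μq*(n*τ)
      = p * ((∑ j ∈ Finset.range n, L j ω) - c * n) := by
    intro n
    rw [Finset.sum_sub_distrib, Finset.sum_const, Finset.card_range, nsmul_eq_mul]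
    rw [hμq, hc, ha, hbb]
    ring
  have hFb : ∀ n : ℕ, n ≥ n₀ → ‖Y n ω‖^p * Real.exp (μq*(n*τ)) ≤ ‖Y₀ ω‖^p := by
    intro n hn
    calc ‖Y n ω‖^p * Real.exp (μq*(n*τ))
        ≤ (‖Y₀ ω‖^p * Real.exp (p * ∑ j ∈ Finset.range n, (L j ω - Real.log d)))
            * Real.exp (μq*(n*τ)) :=
          mul_le_mul_of_nonneg_right (hYnp n) (Real.exp_pos _).le
      _ = ‖Y₀ ω‖^p * Real.exp (p * ((∑ j ∈ Finset.range n, L j ω) - c * n)) := by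
          rw [mul_assoc, ← Real.exp_add, hexp_id n]
      _ ≤ ‖Y₀ ω‖^p * 1 := by
          apply mul_le_mul_of_nonneg_left _ (Real.rpow_nonneg (norm_nonneg _) p)
          rw [Real.exp_le_one_iff]
          have h6 := hSn n hn
          exact mul_nonpos_of_nonneg_of_nonpos (by linarith) (by linarith)
      _ = ‖Y₀ ω‖^p := mul_one _
  have hBdd : BddAbove (range fun n : ℕ => ‖Y n ω‖^p * Real.exp (μq*(n*τ))) := by
    refine ⟨max ((Finset.range (n₀+1)).sup' ⟨0, by simp⟩
      (fun j : ℕ => ‖Y j ω‖^p * Real.exp (μq*(j*τ)))) (‖Y₀ ω‖^p), ?_⟩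
    rintro x ⟨n, rfl⟩
    rcases le_or_gt n n₀ with h | h
    · exact le_max_of_le_left (Finset.le_sup'
        (f := fun j : ℕ => ‖Y j ω‖^p * Real.exp (μq*(j*τ)))
        (Finset.mem_range.mpr (Nat.lt_succ_of_le h)))
    · exact le_max_of_le_right (hFb n h.le)
  intro n
  have hle : ‖Y n ω‖^p * Real.exp (μq*(n*τ))
      ≤ ⨆ k : ℕ, ‖Y k ω‖^p * Real.exp (μq*(k*τ)) := le_ciSup hBdd n
  have hfinal : ‖Y n ω‖^p
      = (‖Y n ω‖^p * Real.exp (μq*(n*τ))) * Real.exp (-μq*(n*τ)) := by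
    rw [mul_assoc, ← Real.exp_add]
    simp
  rw [hfinal]
  exact mul_le_mul_of_nonneg_right hle (Real.exp_pos _).le
end

section
/- Fix an integer N ≥ 1, reals β₀, β₁, λ₁ with λ₁ > β₀ and β₁² < 2(λ₁ − β₀), λ : Fin N → ℝ with λ_k ≥ λ₁ for all k, and an arbitrary step size τ > 0. On any probability space carrying a sequence (ΔW_n)_{n∈ℕ} of real random variables each with law gaussianReal 0 τ and a random variable Y₀ : Ω → ℝ^N with E(‖Y₀‖²) < ∞, such that the family (Y₀, ΔW₀, ΔW₁, …) is mutually independent, define recursively Y_{n+1}(k) = (Y_n(k) + β₁·ΔW_n·Y_n(k))/(1 + τ(λ_k − β₀)) for all n ∈ ℕ and k. Then, setting ρ(τ) = (1 + β₁²τ)/(1 + τ(λ₁ − β₀))², one has ρ(τ) < 1 and E(‖Y_n‖²) ≤ ρ(τ)^n·E(‖Y₀‖²) for all n ∈ ℕ. -/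
open Real MeasureTheory ProbabilityTheory Filter Set
open scoped NNReal ENNReal

section GaussAux

lemma aux_tendsto_mul_exp {b : ℝ} (hb : 0 < b) :
    Tendsto (fun x : ℝ => x * rexp (-b * x ^ 2)) atTop (nhds 0) := by
  have h := rpow_mul_exp_neg_mul_sq_isLittleO_exp_neg hb 1
  have h2 : Tendsto (fun x : ℝ => rexp (-(1/2) * x)) atTop (nhds 0) := by
    have hlin : Tendsto (fun x : ℝ => -(1/2) * x) atTop atBot :=
      (tendsto_const_mul_atBot_of_neg (by norm_num)).2 tendsto_id
    exact Real.tendsto_exp_atBot.comp hlin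
  have h3 : Tendsto (fun x : ℝ => x ^ (1:ℝ) * rexp (-b * x ^ 2)) atTop (nhds 0) :=
    h.isBigO.trans_tendsto h2
  refine h3.congr' ?_
  filter_upwards [Filter.eventually_ge_atTop (0:ℝ)] with x hx
  rw [Real.rpow_one]

lemma aux_integrable_sq_exp {b : ℝ} (hb : 0 < b) :
    Integrable (fun x : ℝ => x ^ 2 * rexp (-b * x ^ 2)) := by
  have h := integrable_rpow_mul_exp_neg_mul_sq hb (s := 2) (by norm_num)
  refine h.congr ?_
  filter_upwards with x
  rw [show ((2:ℝ)) = ((2:ℕ):ℝ) by norm_num, Real.rpow_natCast]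

lemma aux_integral_sq_exp_Ioi {b : ℝ} (hb : 0 < b) :
    ∫ x in Ioi (0:ℝ), x ^ 2 * rexp (-b * x ^ 2)
      = (2*b)⁻¹ * (√(π/b) / 2) := by
  have hF : ∀ x ∈ Ici (0:ℝ), HasDerivAt (fun x : ℝ => -(2*b)⁻¹ * (x * rexp (-b * x ^ 2)))
      (x ^ 2 * rexp (-b * x ^ 2) - (2*b)⁻¹ * rexp (-b * x ^ 2)) x := by
    intro x _
    have hexp : HasDerivAt (fun x : ℝ => rexp (-b * x ^ 2)) ((-b * (2 * x)) * rexp (-b * x ^ 2)) x := by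
      have h1 : HasDerivAt (fun x : ℝ => -b * x ^ 2) (-b * (2 * x)) x := by
        simpa using ((hasDerivAt_pow 2 x).const_mul (-b))
      simpa [mul_comm] using h1.exp
    have := ((hasDerivAt_id x).mul hexp).const_mul (-(2*b)⁻¹)
    refine this.congr_deriv ?_
    show -(2*b)⁻¹ * (1 * rexp (-b * x ^ 2) + x * (-b * (2 * x) * rexp (-b * x ^ 2))) = _
    field_simp [hb.ne']
    ring
  have hint : IntegrableOn (fun x : ℝ => x ^ 2 * rexp (-b * x ^ 2) - (2*b)⁻¹ * rexp (-b * x ^ 2)) (Ioi 0) := by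
    exact ((aux_integrable_sq_exp hb).sub ((integrable_exp_neg_mul_sq hb).const_mul _)).integrableOn
  have htend : Tendsto (fun x : ℝ => -(2*b)⁻¹ * (x * rexp (-b * x ^ 2))) atTop (nhds 0) := by
    have := (aux_tendsto_mul_exp hb).const_mul (-(2*b)⁻¹)
    simpa using this
  have key := MeasureTheory.integral_Ioi_of_hasDerivAt_of_tendsto' hF hint htend
  have hsplit : ∫ x in Ioi (0:ℝ), (x ^ 2 * rexp (-b * x ^ 2) - (2*b)⁻¹ * rexp (-b * x ^ 2))
      = (∫ x in Ioi (0:ℝ), x ^ 2 * rexp (-b * x ^ 2)) - (2*b)⁻¹ * ∫ x in Ioi (0:ℝ), rexp (-b * x ^ 2) := by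
    rw [integral_sub ((aux_integrable_sq_exp hb).integrableOn) (((integrable_exp_neg_mul_sq hb).const_mul _).integrableOn),
      integral_const_mul]
  rw [hsplit, integral_gaussian_Ioi] at key
  simp only [zero_mul, mul_zero, sub_zero, zero_sub, neg_neg, neg_zero] at key
  linarith

lemma aux_integral_mul_exp {b : ℝ} (hb : 0 < b) :
    ∫ x : ℝ, x * rexp (-b * x ^ 2) = 0 := by
  have h := MeasureTheory.integral_neg_eq_self (fun x : ℝ => x * rexp (-b * x ^ 2)) volume
  simp only [neg_mul, neg_neg, neg_sq] at h
  have : ∫ x : ℝ, -(x * rexp (-b * x ^ 2)) = ∫ x : ℝ, x * rexp (-b * x ^ 2) := by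
    simpa [neg_mul] using h
  rw [integral_neg] at this
  linarith

lemma aux_integral_sq_exp {b : ℝ} (hb : 0 < b) :
    ∫ x : ℝ, x ^ 2 * rexp (-b * x ^ 2) = (2*b)⁻¹ * √(π/b) := by
  have heven : ∫ x in Iic (0:ℝ), x ^ 2 * rexp (-b * x ^ 2)
      = ∫ x in Ioi (0:ℝ), x ^ 2 * rexp (-b * x ^ 2) := by
    have h2 := integral_comp_neg_Iic (0:ℝ) (fun x : ℝ => x ^ 2 * rexp (-b * x ^ 2))
    simp only [neg_sq, neg_zero] at h2
    exact h2
  rw [← intervalIntegral.integral_Iic_add_Ioi ((aux_integrable_sq_exp hb).integrableOn)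
    ((aux_integrable_sq_exp hb).integrableOn), heven, aux_integral_sq_exp_Ioi hb]
  ring

lemma aux_integral_gaussianReal {τ : ℝ} (hτ : 0 < τ) (g : ℝ → ℝ) :
    ∫ x, g x ∂(gaussianReal 0 τ.toNNReal)
      = ∫ x, gaussianPDFReal 0 τ.toNNReal x * g x := by
  have hv : τ.toNNReal ≠ 0 := by
    simp [Real.toNNReal_eq_zero, not_le, hτ]
  rw [gaussianReal_of_var_ne_zero 0 hv]
  have hd : (gaussianPDF 0 τ.toNNReal)
      = fun x => ((Real.toNNReal (gaussianPDFReal 0 τ.toNNReal x) : ℝ≥0) : ℝ≥0∞) := by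
    rfl
  rw [hd, integral_withDensity_eq_integral_smul
    (by exact (measurable_gaussianPDFReal 0 τ.toNNReal).real_toNNReal) g]
  congr 1
  funext x
  rw [NNReal.smul_def, smul_eq_mul, Real.coe_toNNReal _ (gaussianPDFReal_nonneg _ _ _)]

lemma aux_gaussian_affine_sq {τ : ℝ} (hτ : 0 < τ) (c : ℝ) :
    ∫ x, (1 + c * x) ^ 2 ∂(gaussianReal 0 τ.toNNReal) = 1 + c ^ 2 * τ := by
  have hv : τ.toNNReal ≠ 0 := by simp [Real.toNNReal_eq_zero, not_le, hτ]
  have hvτ : ((τ.toNNReal : ℝ≥0) : ℝ) = τ := Real.coe_toNNReal _ hτ.le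
  set b : ℝ := (2 * τ)⁻¹ with hbdef
  have hb : 0 < b := by positivity
  set A : ℝ := (√(2 * π * τ))⁻¹ with hA
  have hpdf : ∀ x : ℝ, gaussianPDFReal 0 τ.toNNReal x = A * rexp (-b * x ^ 2) := by
    intro x
    rw [gaussianPDFReal, hvτ, hA]
    congr 1
    rw [hbdef]
    ring
  have hsqrt_pos : 0 < √(2 * π * τ) := Real.sqrt_pos.2 (by positivity)
  have hexp : ∀ x : ℝ, gaussianPDFReal 0 τ.toNNReal x * (1 + c * x) ^ 2
      = gaussianPDFReal 0 τ.toNNReal x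
        + (2 * c * A) * (x * rexp (-b * x ^ 2))
        + (c ^ 2 * A) * (x ^ 2 * rexp (-b * x ^ 2)) := by
    intro x
    rw [hpdf x]
    ring
  rw [aux_integral_gaussianReal hτ]
  calc ∫ x, gaussianPDFReal 0 τ.toNNReal x * (1 + c * x) ^ 2
      = ∫ x, (gaussianPDFReal 0 τ.toNNReal x
        + (2 * c * A) * (x * rexp (-b * x ^ 2))
        + (c ^ 2 * A) * (x ^ 2 * rexp (-b * x ^ 2))) := by
        congr 1; funext x; exact hexp x
    _ = (∫ x, gaussianPDFReal 0 τ.toNNReal x)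
        + (2 * c * A) * (∫ x : ℝ, x * rexp (-b * x ^ 2))
        + (c ^ 2 * A) * (∫ x : ℝ, x ^ 2 * rexp (-b * x ^ 2)) := by
        have h2 : Integrable (fun x : ℝ => (2 * c * A) * (x * rexp (-b * x ^ 2))) volume :=
          (integrable_mul_exp_neg_mul_sq hb).const_mul _
        have h3 : Integrable (fun x : ℝ => (c ^ 2 * A) * (x ^ 2 * rexp (-b * x ^ 2))) volume :=
          (aux_integrable_sq_exp hb).const_mul _
        have h1 : Integrable (fun x : ℝ => gaussianPDFReal 0 τ.toNNReal x
            + (2 * c * A) * (x * rexp (-b * x ^ 2))) volume :=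
          (integrable_gaussianPDFReal 0 τ.toNNReal).add h2
        rw [integral_add h1 h3, integral_add (integrable_gaussianPDFReal 0 τ.toNNReal) h2,
          integral_const_mul, integral_const_mul]
    _ = 1 + c ^ 2 * τ := by
        rw [integral_gaussianPDFReal_eq_one 0 hv, aux_integral_mul_exp hb,
          aux_integral_sq_exp hb]
        have hπb : π / b = 2 * π * τ := by
          rw [hbdef]; field_simp
        rw [hπb, mul_zero, add_zero, hA]
        have h2b : (2 * b)⁻¹ = τ := by rw [hbdef]; field_simp
        rw [h2b]
        field_simp

end GaussAux


instance optionElimMeasurableSpace {N : ℕ} (i : Option ℕ) :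
    MeasurableSpace (Option.elim i (EuclideanSpace ℝ (Fin N)) fun _ => ℝ) :=
  match i with
    | none => (inferInstance : MeasurableSpace (EuclideanSpace ℝ (Fin N)))
    | some _ => (inferInstance : MeasurableSpace ℝ)

section Indep
variable {Ω : Type*} [MeasurableSpace Ω] {P : Measure Ω} {N : ℕ}
  {Y₀ : Ω → EuclideanSpace ℝ (Fin N)} {ΔW : ℕ → Ω → ℝ}

lemma aux_indep_general (hY₀meas : Measurable Y₀) (hΔWmeas : ∀ n, Measurable (ΔW n))
    (hindep : MutuallyIndepInit P Y₀ ΔW) (n : ℕ) (q : ℝ → ℝ) (hq : Measurable q)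
    (T : Finset (Option ℕ)) (hT : Disjoint ((Finset.range n).image some) T)
    {γ : Type*} [MeasurableSpace γ]
    (ψ : (∀ i : T, Option.elim i.1 (EuclideanSpace ℝ (Fin N)) fun _ => ℝ) → γ)
    (hψ : Measurable ψ) :
    IndepFun (fun ω => ∏ j ∈ Finset.range n, q (ΔW j ω))
      (fun ω => ψ (fun i => (match i.1 with
        | none => Y₀
        | some m => ΔW m : Ω → Option.elim i.1 (EuclideanSpace ℝ (Fin N)) fun _ => ℝ) ω)) P := by
  classical
  have hmeas : ∀ i : Option ℕ, Measurable
      (fun ω => (match i with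
        | none => Y₀
        | some m => ΔW m : Ω → Option.elim i (EuclideanSpace ℝ (Fin N)) fun _ => ℝ) ω) := by
    intro i
    cases i with
    | none => exact hY₀meas
    | some m => exact hΔWmeas m
  have base := hindep.indepFun_finset ((Finset.range n).image some) T hT hmeas
  have hφ : Measurable (fun x : (∀ i : ((Finset.range n).image some : Finset (Option ℕ)),
        Option.elim i.1 (EuclideanSpace ℝ (Fin N)) fun _ => ℝ) =>
      ∏ j ∈ (Finset.range n).attach,
        q (x ⟨some j.1, Finset.mem_image_of_mem some j.2⟩)) := by
    apply Finset.measurable_prod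
    intro j _
    exact hq.comp (measurable_pi_apply _)
  have := base.comp hφ hψ
  have h1 : (fun ω => ∏ j ∈ Finset.range n, q (ΔW j ω))
      = (fun x : (∀ i : ((Finset.range n).image some : Finset (Option ℕ)),
            Option.elim i.1 (EuclideanSpace ℝ (Fin N)) fun _ => ℝ) =>
          ∏ j ∈ (Finset.range n).attach,
            q (x ⟨some j.1, Finset.mem_image_of_mem some j.2⟩)) ∘
        (fun ω (i : ((Finset.range n).image some : Finset (Option ℕ))) =>
          (match i.1 with
            | none => Y₀
            | some m => ΔW m : Ω → Option.elim i.1 (EuclideanSpace ℝ (Fin N)) fun _ => ℝ) ω) := by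
    funext ω
    simp only [Function.comp]
    rw [← Finset.prod_attach (Finset.range n) (fun j => q (ΔW j ω))]
  rw [h1]
  exact this

lemma aux_indep_prod_none (hY₀meas : Measurable Y₀) (hΔWmeas : ∀ n, Measurable (ΔW n))
    (hindep : MutuallyIndepInit P Y₀ ΔW) (n : ℕ) (q : ℝ → ℝ) (hq : Measurable q)
    (g : EuclideanSpace ℝ (Fin N) → ℝ) (hg : Measurable g) :
    IndepFun (fun ω => ∏ j ∈ Finset.range n, q (ΔW j ω)) (fun ω => g (Y₀ ω)) P := by
  have hT : Disjoint ((Finset.range n).image some) ({none} : Finset (Option ℕ)) := by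
    simp [Finset.disjoint_right]
  exact aux_indep_general hY₀meas hΔWmeas hindep n q hq {none} hT
    (fun x => g (x ⟨none, Finset.mem_singleton_self none⟩))
    (hg.comp (measurable_pi_apply _))

lemma aux_indep_prod_single (hY₀meas : Measurable Y₀) (hΔWmeas : ∀ n, Measurable (ΔW n))
    (hindep : MutuallyIndepInit P Y₀ ΔW) (n : ℕ) (q : ℝ → ℝ) (hq : Measurable q) :
    IndepFun (fun ω => ∏ j ∈ Finset.range n, q (ΔW j ω)) (fun ω => q (ΔW n ω)) P := by
  have hT : Disjoint ((Finset.range n).image some) ({some n} : Finset (Option ℕ)) := by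
    simp only [Finset.disjoint_right, Finset.mem_singleton, Finset.mem_image,
      Finset.mem_range]
    rintro a rfl ⟨m, hm, hms⟩
    cases hms
    omega
  exact aux_indep_general hY₀meas hΔWmeas hindep n q hq {some n} hT
    (fun x => q (x ⟨some n, Finset.mem_singleton_self _⟩))
    (hq.comp (measurable_pi_apply _))

end Indep


/-- Exact mean-square (`p = 2`) discrete stability of the fully discrete
spectral Galerkin / implicit Euler–Maruyama scheme, valid unconditionally in
the step size `τ > 0`: if `λ₁ > β₀` and `β₁² < 2 (λ₁ - β₀)` then, with
`ρ(τ) = (1 + β₁² τ)/(1 + τ (λ₁ - β₀))²`, one has `ρ(τ) < 1` and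
`E(‖Y_n‖²) ≤ ρ(τ)ⁿ E(‖Y₀‖²)` for all `n`. -/
theorem discrete_mean_square_stability
    {Ω : Type*} [MeasurableSpace Ω] (P : Measure Ω) [IsProbabilityMeasure P]
    (N : ℕ) (hN : 1 ≤ N) (β₀ β₁ lam1 : ℝ) (hdrift : β₀ < lam1)
    (hcond : β₁ ^ 2 < 2 * (lam1 - β₀))
    (lam : Fin N → ℝ) (hlam : ∀ k, lam1 ≤ lam k)
    (τ : ℝ) (hτ : 0 < τ)
    (ΔW : ℕ → Ω → ℝ) (hΔWmeas : ∀ n, Measurable (ΔW n))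
    (hΔWlaw : ∀ n, Measure.map (ΔW n) P = gaussianReal 0 τ.toNNReal)
    (Y₀ : Ω → EuclideanSpace ℝ (Fin N)) (hY₀meas : Measurable Y₀)
    (hY₀int : Integrable (fun ω => ‖Y₀ ω‖ ^ 2) P)
    (hindep : MutuallyIndepInit P Y₀ ΔW)
    (Y : ℕ → Ω → EuclideanSpace ℝ (Fin N)) (hY0 : Y 0 = Y₀)
    (hYrec : ∀ n ω k, Y (n + 1) ω k =
      (Y n ω k + β₁ * ΔW n ω * Y n ω k) / (1 + τ * (lam k - β₀)))
    : (1 + β₁ ^ 2 * τ) / (1 + τ * (lam1 - β₀)) ^ 2 < 1 ∧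
      ∀ n : ℕ, ∫ ω, ‖Y n ω‖ ^ 2 ∂P ≤
        ((1 + β₁ ^ 2 * τ) / (1 + τ * (lam1 - β₀)) ^ 2) ^ n *
          ∫ ω, ‖Y₀ ω‖ ^ 2 ∂P := by
  have hd : 0 < lam1 - β₀ := sub_pos.2 hdrift
  have hc1 : 1 < 1 + τ * (lam1 - β₀) := by nlinarith
  have hc1pos : 0 < 1 + τ * (lam1 - β₀) := by linarith
  have hρlt : (1 + β₁ ^ 2 * τ) / (1 + τ * (lam1 - β₀)) ^ 2 < 1 := by
    rw [div_lt_one (by positivity)]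
    nlinarith [mul_pos (sub_pos.2 hcond) hτ, sq_nonneg (τ * (lam1 - β₀))]
  refine ⟨hρlt, ?_⟩
  -- notation
  set c : Fin N → ℝ := fun k => 1 + τ * (lam k - β₀) with hc
  have hck : ∀ k, 1 + τ * (lam1 - β₀) ≤ c k := by
    intro k
    have := hlam k
    simp only [hc]
    nlinarith
  have hckpos : ∀ k, 0 < c k := fun k => lt_of_lt_of_le hc1pos (hck k)
  -- explicit formula
  have hformula : ∀ n ω k, Y n ω k
      = Y₀ ω k * (∏ j ∈ Finset.range n, (1 + β₁ * ΔW j ω)) / c k ^ n := by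
    intro n
    induction n with
    | zero => intro ω k; simp [hY0]
    | succ m ih =>
      intro ω k
      rw [hYrec m ω k, ih ω k, Finset.prod_range_succ, show 1 + τ * (lam k - β₀) = c k from rfl]
      have hck0 : c k ≠ 0 := (hckpos k).ne'
      field_simp
      ring
  have hnorm : ∀ (x : EuclideanSpace ℝ (Fin N)), ‖x‖ ^ 2 = ∑ k, (x k) ^ 2 := by
    intro x
    rw [EuclideanSpace.norm_eq, Real.sq_sqrt (Finset.sum_nonneg fun i _ => sq_nonneg _)]
    exact Finset.sum_congr rfl fun i _ => by rw [Real.norm_eq_abs, sq_abs]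
  set q : ℝ → ℝ := fun x => (1 + β₁ * x) ^ 2 with hqdef
  have hq : Measurable q := by
    apply Measurable.pow_const
    exact measurable_const.add (measurable_const.mul measurable_id)
  have hqnonneg : ∀ x, 0 ≤ q x := fun x => sq_nonneg _
  -- expectation of one factor
  have hqint : ∀ m, ∫ ω, q (ΔW m ω) ∂P = 1 + β₁ ^ 2 * τ := by
    intro m
    have := integral_map (μ := P) (φ := ΔW m) (hΔWmeas m).aemeasurable
      (f := q) hq.aestronglyMeasurable
    rw [hΔWlaw m] at this
    rw [← this]
    exact aux_gaussian_affine_sq hτ β₁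
  -- expectation of the product of factors
  have hEf : ∀ m, ∫ ω, (∏ j ∈ Finset.range m, q (ΔW j ω)) ∂P = (1 + β₁ ^ 2 * τ) ^ m := by
    intro m
    induction m with
    | zero => simp
    | succ m ih =>
      have hind := aux_indep_prod_single hY₀meas hΔWmeas hindep m q hq
      have hmul := hind.integral_fun_mul_eq_mul_integral
        ((Finset.measurable_prod _ fun j _ => hq.comp (hΔWmeas j)).aestronglyMeasurable)
        ((hq.comp (hΔWmeas m)).aestronglyMeasurable)
      calc ∫ ω, (∏ j ∈ Finset.range (m+1), q (ΔW j ω)) ∂P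
          = ∫ ω, (∏ j ∈ Finset.range m, q (ΔW j ω)) * q (ΔW m ω) ∂P := by
            congr 1; funext ω; rw [Finset.prod_range_succ]
        _ = (∫ ω, (∏ j ∈ Finset.range m, q (ΔW j ω)) ∂P) * ∫ ω, q (ΔW m ω) ∂P := hmul
        _ = (1 + β₁ ^ 2 * τ) ^ (m+1) := by rw [ih, hqint m]; ring
  intro n
  -- the Y₀ part
  set g : EuclideanSpace ℝ (Fin N) → ℝ := fun y => ∑ k, (y k) ^ 2 / (c k ^ n) ^ 2 with hgdef
  have hgmeas : Measurable g := by
    apply Finset.measurable_sum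
    intro k _
    fun_prop
  have hgnonneg : ∀ y, 0 ≤ g y := by
    intro y
    apply Finset.sum_nonneg
    intro k _
    positivity
  -- pointwise factorization
  have hprod : ∀ ω, ‖Y n ω‖ ^ 2 = (∏ j ∈ Finset.range n, q (ΔW j ω)) * g (Y₀ ω) := by
    intro ω
    rw [hnorm, hgdef, Finset.mul_sum]
    apply Finset.sum_congr rfl
    intro k _
    rw [hformula n ω k, hqdef]
    simp only []
    rw [Finset.prod_pow]
    have hck0 : c k ≠ 0 := (hckpos k).ne'
    field_simp
  -- split the expectation
  have hindl := aux_indep_prod_none hY₀meas hΔWmeas hindep n q hq g hgmeas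
  have hsplit := hindl.integral_fun_mul_eq_mul_integral
    ((Finset.measurable_prod _ fun j _ => hq.comp (hΔWmeas j)).aestronglyMeasurable)
    ((hgmeas.comp hY₀meas).aestronglyMeasurable)
  have hmain : ∫ ω, ‖Y n ω‖ ^ 2 ∂P
      = (1 + β₁ ^ 2 * τ) ^ n * ∫ ω, g (Y₀ ω) ∂P := by
    calc ∫ ω, ‖Y n ω‖ ^ 2 ∂P
        = ∫ ω, (∏ j ∈ Finset.range n, q (ΔW j ω)) * g (Y₀ ω) ∂P := by
          congr 1; funext ω; exact hprod ω
      _ = (∫ ω, (∏ j ∈ Finset.range n, q (ΔW j ω)) ∂P) * ∫ ω, g (Y₀ ω) ∂P := hsplit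
      _ = (1 + β₁ ^ 2 * τ) ^ n * ∫ ω, g (Y₀ ω) ∂P := by rw [hEf n]
  -- bound the Y₀ part
  have hEg : ∫ ω, g (Y₀ ω) ∂P
      ≤ (∫ ω, ‖Y₀ ω‖ ^ 2 ∂P) / ((1 + τ * (lam1 - β₀)) ^ n) ^ 2 := by
    rw [div_eq_mul_inv, ← integral_mul_const]
    apply integral_mono_of_nonneg
    · exact Filter.Eventually.of_forall fun ω => hgnonneg _
    · exact hY₀int.mul_const _
    · apply Filter.Eventually.of_forall
      intro ω
      simp only []
      rw [hnorm, Finset.sum_mul, hgdef]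
      apply Finset.sum_le_sum
      intro k _
      rw [div_eq_mul_inv]
      apply mul_le_mul_of_nonneg_left _ (sq_nonneg _)
      apply inv_anti₀ (by positivity)
      have h1 : (1 + τ * (lam1 - β₀)) ^ n ≤ c k ^ n :=
        pow_le_pow_left₀ hc1pos.le (hck k) n
      exact pow_le_pow_left₀ (by positivity) h1 2
  -- conclude
  have hE0 : 0 ≤ ∫ ω, ‖Y₀ ω‖ ^ 2 ∂P := integral_nonneg fun ω => sq_nonneg _
  have hfin : (1 + β₁ ^ 2 * τ) ^ n
      * ((∫ ω, ‖Y₀ ω‖ ^ 2 ∂P) / ((1 + τ * (lam1 - β₀)) ^ n) ^ 2)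
      = ((1 + β₁ ^ 2 * τ) / (1 + τ * (lam1 - β₀)) ^ 2) ^ n * ∫ ω, ‖Y₀ ω‖ ^ 2 ∂P := by
    rw [div_pow, ← pow_mul, ← pow_mul, Nat.mul_comm 2 n]
    ring
  rw [hmain, ← hfin]
  apply mul_le_mul_of_nonneg_left hEg (by positivity)
end

section
/- Let p ≥ 1 be real and β₀, β₁, λ ∈ ℝ with λ > β₀, and for τ > 0 set a(τ) = 1/(1 + τ(λ − β₀)). Then, as τ → 0⁺, a(τ)^p·∫ |1 + β₁·√τ·x|^p dγ(x) = 1 − (p(λ − β₀) − (p(p−1)/2)·β₁²)·τ + o(τ), where γ = gaussianReal 0 1; that is, the difference between the left-hand side and 1 − (p(λ − β₀) − (p(p−1)/2)β₁²)τ is little-o of τ as τ → 0 from the right. -/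
open Real MeasureTheory ProbabilityTheory Asymptotics Filter Set
open scoped NNReal ENNReal

lemma my_integral_gauss (f : ℝ → ℝ) :
    ∫ x, f x ∂(gaussianReal 0 1) = ∫ x, gaussianPDFReal 0 1 x * f x := by
  rw [gaussianReal_of_var_ne_zero _ one_ne_zero]
  have h : gaussianPDF 0 1 = fun x => ((gaussianPDFReal 0 1 x).toNNReal : ℝ≥0∞) := rfl
  rw [h, integral_withDensity_eq_integral_smul
    (measurable_gaussianPDFReal 0 1).real_toNNReal f]
  congr 1
  ext x
  simp [NNReal.smul_def, Real.coe_toNNReal _ (gaussianPDFReal_nonneg 0 1 x)]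

lemma my_integrable_gauss_iff (f : ℝ → ℝ) :
    Integrable f (gaussianReal 0 1) ↔
      Integrable (fun x => f x * gaussianPDFReal 0 1 x) volume := by
  rw [gaussianReal_of_var_ne_zero _ one_ne_zero,
    integrable_withDensity_iff (measurable_gaussianPDF 0 1)
      (ae_of_all _ fun x => ENNReal.ofReal_lt_top)]
  refine integrable_congr (ae_of_all _ fun x => ?_)
  simp [gaussianPDF, ENNReal.toReal_ofReal (gaussianPDFReal_nonneg 0 1 x)]

lemma my_pdf_eq (x : ℝ) :
    gaussianPDFReal 0 1 x = (Real.sqrt (2 * π))⁻¹ * rexp (-(1/2) * x ^ 2) := by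
  simp only [gaussianPDFReal]
  norm_num [mul_comm]
  left; ring

lemma my_integrable_abs_rpow_exp {s : ℝ} (hs : -1 < s) :
    Integrable (fun x : ℝ => |x| ^ s * rexp (-(1/2) * x ^ 2)) volume := by
  have hb : (0:ℝ) < 1/2 := by norm_num
  have h1 : IntegrableOn (fun x : ℝ => |x| ^ s * rexp (-(1/2) * x ^ 2)) (Set.Ioi 0) := by
    refine (integrableOn_rpow_mul_exp_neg_mul_sq hb hs).congr_fun (fun x hx => ?_)
      measurableSet_Ioi
    rw [abs_of_pos hx]
  have h2 : IntegrableOn (fun x : ℝ => |x| ^ s * rexp (-(1/2) * x ^ 2)) (Set.Iic 0) := by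
    rw [← (Measure.measurePreserving_neg (volume : Measure ℝ)).integrableOn_comp_preimage
      (Homeomorph.neg ℝ).measurableEmbedding]
    have hset : Neg.neg ⁻¹' Set.Iic (0:ℝ) = Set.Ici 0 := by ext y; simp
    simp only [Function.comp_def, neg_sq, abs_neg, hset]
    exact (integrableOn_Ici_iff_integrableOn_Ioi).mpr h1
  rw [← integrableOn_univ, ← Set.Iic_union_Ioi (a := (0:ℝ)), integrableOn_union]
  exact ⟨h2, h1⟩

lemma my_integrable_abs_rpow_gauss {s : ℝ} (hs : -1 < s) :
    Integrable (fun x : ℝ => |x| ^ s) (gaussianReal 0 1) := by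
  rw [my_integrable_gauss_iff]
  have := (my_integrable_abs_rpow_exp hs).const_mul (Real.sqrt (2 * π))⁻¹
  refine this.congr (ae_of_all _ fun x => ?_)
  simp only [my_pdf_eq]; ring

lemma my_integrable_id_gauss : Integrable (fun x : ℝ => x) (gaussianReal 0 1) := by
  refine (my_integrable_abs_rpow_gauss (by norm_num : (-1:ℝ) < 1)).mono'
    measurable_id.aestronglyMeasurable (ae_of_all _ fun x => ?_)
  simp [Real.rpow_one]

lemma my_integrable_sq_gauss : Integrable (fun x : ℝ => x ^ 2) (gaussianReal 0 1) := by
  refine (my_integrable_abs_rpow_gauss (by norm_num : (-1:ℝ) < 2)).mono'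
    (measurable_id.pow_const 2).aestronglyMeasurable (ae_of_all _ fun x => ?_)
  rw [Real.norm_eq_abs, abs_pow, ← Real.rpow_natCast |x| 2]
  norm_num

lemma my_integral_id_gauss : ∫ x, x ∂(gaussianReal 0 1) = 0 := by
  have hmap := gaussianReal_map_const_mul (μ := 0) (v := 1) (-1)
  have h1 : (NNReal.mk ((-1:ℝ)^2) (sq_nonneg _) * (1:ℝ≥0)) = (1 : ℝ≥0) := by
    ext; norm_num
  rw [mul_zero, h1] at hmap
  have h2 : ∫ x, x ∂(gaussianReal 0 1)
      = ∫ x, (-1) * x ∂(gaussianReal 0 1) := by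
    conv_lhs => rw [← hmap]
    exact integral_map (φ := fun x : ℝ => -1 * x) (f := fun x : ℝ => x)
      (measurable_id.const_mul (-1)).aemeasurable measurable_id.aestronglyMeasurable
  have := h2
  rw [integral_const_mul] at this
  linarith [this]

lemma my_integral_sq_exp : ∫ x : ℝ, x ^ 2 * rexp (-(1/2) * x ^ 2) = Real.sqrt (2 * π) := by
  have hb : (0:ℝ) < 1/2 := by norm_num
  have heven : ∀ x : ℝ, (-x) ^ 2 * rexp (-(1/2) * (-x) ^ 2) = x ^ 2 * rexp (-(1/2) * x ^ 2) := by
    intro x; rw [neg_sq]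
  have h1 : IntegrableOn (fun x : ℝ => x ^ 2 * rexp (-(1/2) * x ^ 2)) (Ioi 0) := by
    have := integrableOn_rpow_mul_exp_neg_mul_sq hb (by norm_num : (-1:ℝ) < 2)
    refine this.congr_fun (fun x hx => ?_) measurableSet_Ioi
    rw [← Real.rpow_natCast x 2]; norm_num
  have h2 : IntegrableOn (fun x : ℝ => x ^ 2 * rexp (-(1/2) * x ^ 2)) (Iic 0) := by
    rw [← (Measure.measurePreserving_neg (volume : Measure ℝ)).integrableOn_comp_preimage
      (Homeomorph.neg ℝ).measurableEmbedding]
    have hset : Neg.neg ⁻¹' Set.Iic (0:ℝ) = Set.Ici 0 := by ext y; simp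
    simp only [Function.comp_def, neg_sq, hset]
    exact (integrableOn_Ici_iff_integrableOn_Ioi).mpr h1
  have hsplit := intervalIntegral.integral_Iic_add_Ioi (μ := volume) h2 h1
  have hIic : ∫ x in Iic (0:ℝ), x ^ 2 * rexp (-(1/2) * x ^ 2)
      = ∫ x in Ioi (0:ℝ), x ^ 2 * rexp (-(1/2) * x ^ 2) := by
    have h := integral_comp_neg_Ioi (c := 0) (f := fun x => x ^ 2 * rexp (-(1/2) * x ^ 2))
    simp only [neg_sq, neg_zero] at h
    exact h.symm
  -- value on Ioi 0 via Gamma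
  have hIoi : ∫ x in Ioi (0:ℝ), x ^ 2 * rexp (-(1/2) * x ^ 2) = Real.sqrt (2*π) / 2 := by
    have := integral_rpow_mul_exp_neg_mul_rpow (p := 2) (q := 2) (b := 1/2)
      (by norm_num) (by norm_num) (by norm_num)
    have hcongr : ∫ x in Ioi (0:ℝ), x ^ (2:ℝ) * rexp (-(1/2) * x ^ (2:ℝ))
        = ∫ x in Ioi (0:ℝ), x ^ 2 * rexp (-(1/2) * x ^ 2) := by
      refine setIntegral_congr_fun measurableSet_Ioi (fun x hx => ?_)
      rw [← Real.rpow_natCast x 2]; norm_num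
    rw [hcongr] at this
    rw [this]
    have hG : Real.Gamma ((2+1)/2) = Real.sqrt π / 2 := by
      have : ((2:ℝ)+1)/2 = 1/2 + 1 := by norm_num
      rw [this, Real.Gamma_add_one (by norm_num), Real.Gamma_one_half_eq]
      ring
    rw [hG]
    have hpow : ((1:ℝ)/2) ^ (-((2:ℝ)+1)/2) = 2 * Real.sqrt 2 := by
      rw [show (-((2:ℝ)+1)/2) = -(3/2) by norm_num, Real.rpow_neg (by norm_num),
        show ((1:ℝ)/2) = 2⁻¹ by norm_num, Real.inv_rpow (by norm_num), inv_inv,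
        show ((3:ℝ)/2) = 1 + (1/2 : ℝ) by norm_num,
        Real.rpow_add (by norm_num), Real.rpow_one, ← Real.sqrt_eq_rpow]
    rw [hpow, Real.sqrt_mul (by norm_num)]
    ring
  rw [← hsplit, hIic, hIoi]; ring

lemma my_integral_sq_gauss : ∫ x, x ^ 2 ∂(gaussianReal 0 1) = 1 := by
  rw [my_integral_gauss (fun x => x ^ 2)]
  have h : (fun x : ℝ => gaussianPDFReal 0 1 x * x ^ 2)
      = fun x => (Real.sqrt (2 * π))⁻¹ * (x ^ 2 * rexp (-(1/2) * x ^ 2)) := by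
    funext x; rw [my_pdf_eq]; ring
  rw [h, integral_const_mul, my_integral_sq_exp]
  have : (0:ℝ) < Real.sqrt (2 * π) := Real.sqrt_pos.mpr (by positivity)
  field_simp

/-- quadratic Taylor remainder of `u ↦ |1+u|^p` -/
noncomputable def Rem (p u : ℝ) : ℝ := |1 + u| ^ p - 1 - p * u - p * (p - 1) / 2 * u ^ 2

lemma pow_base_bound {t : ℝ} (q : ℝ) (ht : |t| ≤ 1/2) : (1 + t) ^ q ≤ 2 ^ |q| := by
  have h1 : (1:ℝ)/2 ≤ 1 + t := by
    have := abs_le.mp ht; linarith [this.1]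
  have h2 : 1 + t ≤ 2 := by
    have := abs_le.mp ht; linarith [this.2]
  rcases le_or_gt 0 q with hq | hq
  · calc (1 + t) ^ q ≤ 2 ^ q := Real.rpow_le_rpow (by linarith) h2 hq
      _ ≤ 2 ^ |q| := Real.rpow_le_rpow_of_exponent_le one_le_two (le_abs_self q)
  · have habs : |q| = -q := abs_of_neg hq
    rw [habs]
    have hrw : (1 + t) ^ q = ((1 + t) ^ (-q))⁻¹ := by
      rw [← Real.rpow_neg (by linarith : (0:ℝ) ≤ 1 + t), neg_neg]
    have h2inv : (2:ℝ) ^ (-q) = (((2:ℝ)⁻¹) ^ (-q))⁻¹ := by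
      rw [Real.inv_rpow (by norm_num), inv_inv]
    rw [hrw, h2inv]
    have h3 : ((2:ℝ)⁻¹) ^ (-q) ≤ (1 + t) ^ (-q) :=
      Real.rpow_le_rpow (by norm_num) (by linarith) (by linarith)
    exact inv_anti₀ (by positivity) h3

lemma rem_small (p : ℝ) (hp : 1 ≤ p) {u : ℝ} (hu : |u| ≤ 1/2) :
    |Rem p u| ≤ (p * (p - 1) * (|p - 2| * (2:ℝ) ^ |p - 3|)) * (|u| ^ 2 * |u|) := by
  set K : ℝ := |p - 2| * (2:ℝ) ^ |p - 3| with hK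
  have hK0 : 0 ≤ K := by positivity
  have hpp : 0 ≤ p * (p - 1) := by nlinarith
  set J : Set ℝ := Set.uIcc 0 u with hJ
  have hJconv : Convex ℝ J := convex_uIcc 0 u
  have h0J : (0:ℝ) ∈ J := Set.left_mem_uIcc
  have huJ : u ∈ J := Set.right_mem_uIcc
  have hmem : ∀ t ∈ J, |t| ≤ |u| := by
    intro t htJ
    simp only [hJ, Set.uIcc_eq_union] at htJ
    rcases htJ with h | h
    · rw [Set.mem_Icc] at h
      rw [abs_le]
      exact ⟨by linarith [h.1, abs_nonneg u], by linarith [h.2, le_abs_self u]⟩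
    · rw [Set.mem_Icc] at h
      rw [abs_le]
      exact ⟨by linarith [h.1, neg_abs_le u], by linarith [h.2, abs_nonneg u]⟩
  have hmem' : ∀ t ∈ J, |t| ≤ 1/2 := fun t ht => le_trans (hmem t ht) hu
  have hposJ : ∀ t ∈ J, (0:ℝ) < 1 + t := by
    intro t ht
    have := abs_le.mp (hmem' t ht)
    linarith [this.1]
  -- step 1 : bound on (1+t)^(p-2) - 1
  have hψ : ∀ t ∈ J, HasDerivWithinAt (fun s => (1 + s) ^ (p - 2))
      ((p - 2) * (1 + t) ^ (p - 2 - 1)) J t := by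
    intro t ht
    have hinner : HasDerivAt (fun s : ℝ => 1 + s) 1 t := by
      simpa using (hasDerivAt_id t).const_add 1
    have houter := Real.hasDerivAt_rpow_const (x := 1 + t) (p := p - 2)
      (Or.inl (ne_of_gt (hposJ t ht)))
    have := houter.comp t hinner
    simpa [Function.comp_def] using this.hasDerivWithinAt
  have hψbound : ∀ t ∈ J, ‖(p - 2) * (1 + t) ^ (p - 2 - 1)‖ ≤ K := by
    intro t ht
    rw [Real.norm_eq_abs, abs_mul]
    have h1 : |(1 + t) ^ (p - 2 - 1)| = (1 + t) ^ (p - 2 - 1) :=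
      abs_of_pos (Real.rpow_pos_of_pos (hposJ t ht) _)
    rw [h1, hK, show p - 2 - 1 = p - 3 by ring]
    exact mul_le_mul_of_nonneg_left
      ((pow_base_bound (p-3) (hmem' t ht)).trans (le_of_eq rfl))
      (abs_nonneg _)
  have hψest : ∀ t ∈ J, |(1 + t) ^ (p - 2) - 1| ≤ K * |u| := by
    intro t ht
    have := Convex.norm_image_sub_le_of_norm_hasDerivWithin_le hψ hψbound hJconv h0J ht
    simp only [Real.norm_eq_abs, sub_zero] at this
    calc |(1 + t) ^ (p - 2) - 1|
        = |(1 + t) ^ (p - 2) - (1 + 0) ^ (p - 2)| := by norm_num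
      _ ≤ K * |t| := this
      _ ≤ K * |u| := mul_le_mul_of_nonneg_left (hmem t ht) hK0
  -- step 2 : bound on R₁ t := p (1+t)^(p-1) - p - p(p-1) t
  have hR₁deriv : ∀ t ∈ J, HasDerivWithinAt
      (fun s => p * (1 + s) ^ (p - 1) - p - p * (p - 1) * s)
      (p * ((p - 1) * (1 + t) ^ (p - 1 - 1)) - p * (p - 1)) J t := by
    intro t ht
    have hinner : HasDerivAt (fun s : ℝ => 1 + s) 1 t := by
      simpa using (hasDerivAt_id t).const_add 1
    have houter := Real.hasDerivAt_rpow_const (x := 1 + t) (p := p - 1)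
      (Or.inl (ne_of_gt (hposJ t ht)))
    have h1 := (houter.comp t hinner).const_mul p
    have h2 : HasDerivAt (fun s : ℝ => p * (p - 1) * s) (p * (p - 1)) t := by
      simpa using (hasDerivAt_id t).const_mul (p * (p - 1))
    have := (h1.sub_const p).sub h2
    simpa [mul_comm, mul_assoc, mul_left_comm, Pi.sub_def] using this.hasDerivWithinAt
  have hR₁derivbound : ∀ t ∈ J,
      ‖p * ((p - 1) * (1 + t) ^ (p - 1 - 1)) - p * (p - 1)‖ ≤ p * (p - 1) * (K * |u|) := by
    intro t ht
    have : p * ((p - 1) * (1 + t) ^ (p - 1 - 1)) - p * (p - 1)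
        = p * (p - 1) * ((1 + t) ^ (p - 2) - 1) := by
      rw [show p - 1 - 1 = p - 2 by ring]; ring
    rw [Real.norm_eq_abs, this, abs_mul, abs_of_nonneg hpp]
    exact mul_le_mul_of_nonneg_left (hψest t ht) hpp
  have hR₁est : ∀ t ∈ J, |p * (1 + t) ^ (p - 1) - p - p * (p - 1) * t|
      ≤ p * (p - 1) * (K * |u|) * |u| := by
    intro t ht
    have := Convex.norm_image_sub_le_of_norm_hasDerivWithin_le hR₁deriv hR₁derivbound
      hJconv h0J ht
    simp only [Real.norm_eq_abs, sub_zero] at this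
    have h0 : p * (1 + 0) ^ (p - 1) - p - p * (p - 1) * 0 = 0 := by
      norm_num
    rw [h0, sub_zero] at this
    calc |p * (1 + t) ^ (p - 1) - p - p * (p - 1) * t|
        ≤ p * (p - 1) * (K * |u|) * |t| := this
      _ ≤ p * (p - 1) * (K * |u|) * |u| :=
          mul_le_mul_of_nonneg_left (hmem t ht) (by positivity)
  -- step 3 : bound on Rem
  have hRemderiv : ∀ t ∈ J, HasDerivWithinAt (Rem p)
      (p * (1 + t) ^ (p - 1) - p - p * (p - 1) * t) J t := by
    intro t ht
    have hinner : HasDerivAt (fun s : ℝ => 1 + s) 1 t := by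
      simpa using (hasDerivAt_id t).const_add 1
    have houter := Real.hasDerivAt_rpow_const (x := 1 + t) (p := p)
      (Or.inl (ne_of_gt (hposJ t ht)))
    have h1 := (houter.comp t hinner)
    have h2 : HasDerivAt (fun s : ℝ => 1 + p * s + p * (p - 1) / 2 * s ^ 2)
        (p + p * (p - 1) / 2 * (2 * t)) t := by
      have ha : HasDerivAt (fun s : ℝ => s ^ 2) (2 * t) t := by
        simpa using hasDerivAt_pow 2 t
      have hb : HasDerivAt (fun s : ℝ => p * s) p t := by
        simpa using (hasDerivAt_id t).const_mul p
      simpa [Pi.add_def] using ((hb.const_add 1).add (ha.const_mul (p * (p - 1) / 2)))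
    have h3 := h1.sub h2
    have h4 : HasDerivWithinAt
        (fun s => (1 + s) ^ p - (1 + p * s + p * (p - 1) / 2 * s ^ 2))
        (p * (1 + t) ^ (p - 1) * 1 - (p + p * (p - 1) / 2 * (2 * t))) J t :=
      h3.hasDerivWithinAt
    have h5 : HasDerivWithinAt (Rem p)
        (p * (1 + t) ^ (p - 1) * 1 - (p + p * (p - 1) / 2 * (2 * t))) J t := by
      refine h4.congr (fun s hs => ?_) ?_
      · unfold Rem
        rw [abs_of_pos (hposJ s hs)]; ring
      · unfold Rem
        rw [abs_of_pos (hposJ t ht)]; ring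
    have heq : p * (1 + t) ^ (p - 1) * 1 - (p + p * (p - 1) / 2 * (2 * t))
        = p * (1 + t) ^ (p - 1) - p - p * (p - 1) * t := by ring
    rwa [heq] at h5
  have hRembound : ∀ t ∈ J, ‖p * (1 + t) ^ (p - 1) - p - p * (p - 1) * t‖
      ≤ p * (p - 1) * (K * |u|) * |u| := fun t ht => by
    rw [Real.norm_eq_abs]; exact hR₁est t ht
  have hfinal := Convex.norm_image_sub_le_of_norm_hasDerivWithin_le hRemderiv hRembound
    hJconv h0J huJ
  simp only [Real.norm_eq_abs, sub_zero] at hfinal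
  have hRem0 : Rem p 0 = 0 := by unfold Rem; norm_num
  rw [hRem0, sub_zero] at hfinal
  calc |Rem p u| ≤ p * (p - 1) * (K * |u|) * |u| * |u| := hfinal
    _ = p * (p - 1) * K * (|u| ^ 2 * |u|) := by ring

lemma rem_large (p : ℝ) (hp : 1 ≤ p) {u : ℝ} (hu : 1/2 ≤ |u|) :
    |Rem p u| ≤ ((3:ℝ) ^ p * 8 + 8 + 8 * p + p * (p - 1))
      * (|u| ^ (3:ℝ) + |u| ^ (max p 3)) := by
  set a := |u| with ha
  have ha0 : (0:ℝ) < a := lt_of_lt_of_le (by norm_num) hu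
  have hcube : |u| ^ (3:ℝ) = a ^ 3 := by
    rw [ha]; norm_num
  have hsum0 : (0:ℝ) ≤ a ^ (max p 3) := Real.rpow_nonneg (le_of_lt ha0) _
  have hcube_le : a ^ 3 ≤ |u| ^ (3:ℝ) + |u| ^ (max p 3) := by
    rw [hcube]; linarith
  have hkey : a ≤ 8 * a ^ 3 := by
    nlinarith [mul_nonneg (by linarith : (0:ℝ) ≤ 2*a - 1) (sq_nonneg a), sq_nonneg a]
  -- a ^ p bound
  have hap : a ^ p ≤ 8 * (a ^ 3) + a ^ (max p 3) := by
    rcases le_or_gt a 1 with h1 | h1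
    · have h2 : a ^ p ≤ a ^ (1:ℝ) :=
        Real.rpow_le_rpow_of_exponent_ge ha0 h1 hp
      rw [Real.rpow_one] at h2
      linarith [hkey]
    · have h2 : a ^ p ≤ a ^ (max p 3) :=
        Real.rpow_le_rpow_of_exponent_le (le_of_lt h1) (le_max_left p 3)
      have : (0:ℝ) ≤ a ^ 3 := by positivity
      linarith
  have h1pow : |1 + u| ^ p ≤ 3 ^ p * a ^ p := by
    have hb : |1 + u| ≤ 3 * a := by
      calc |1 + u| ≤ 1 + a := by
            have := abs_add_le 1 u; simpa using this
        _ ≤ 3 * a := by linarith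
    calc |1 + u| ^ p ≤ (3 * a) ^ p :=
          Real.rpow_le_rpow (abs_nonneg _) hb (by linarith)
      _ = 3 ^ p * a ^ p := Real.mul_rpow (by norm_num) (le_of_lt ha0)
  have habs : |Rem p u| ≤ |1 + u| ^ p + 1 + p * a + p * (p - 1) / 2 * a ^ 2 := by
    unfold Rem
    have h1 : |p * u| = p * a := by rw [abs_mul, abs_of_nonneg (by linarith : (0:ℝ) ≤ p)]
    have h2 : |p * (p - 1) / 2 * u ^ 2| = p * (p - 1) / 2 * a ^ 2 := by
      rw [abs_mul, abs_of_nonneg (by nlinarith : (0:ℝ) ≤ p * (p - 1) / 2),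
        abs_of_nonneg (sq_nonneg u), ha, ← sq_abs]
    have h3 : |(|1 + u| ^ p)| = |1 + u| ^ p := abs_of_nonneg (Real.rpow_nonneg (abs_nonneg _) _)
    calc |(|1 + u| ^ p - 1 - p * u - p * (p - 1) / 2 * u ^ 2)|
        ≤ |(|1 + u| ^ p)| + |(1:ℝ)| + |p * u| + |p * (p - 1) / 2 * u ^ 2| := by
          have := abs_sub (|1 + u| ^ p - 1 - p * u) (p * (p - 1) / 2 * u ^ 2)
          have h4 := abs_sub (|1 + u| ^ p - 1) (p * u)
          have h5 := abs_sub (|1 + u| ^ p) (1:ℝ)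
          calc |(|1 + u| ^ p - 1 - p * u - p * (p - 1) / 2 * u ^ 2)|
              ≤ |(|1 + u| ^ p - 1 - p * u)| + |p * (p - 1) / 2 * u ^ 2| := abs_sub _ _
            _ ≤ |(|1 + u| ^ p - 1)| + |p * u| + |p * (p - 1) / 2 * u ^ 2| := by
                linarith [abs_sub (|1 + u| ^ p - 1) (p * u)]
            _ ≤ |(|1 + u| ^ p)| + |(1:ℝ)| + |p * u| + |p * (p - 1) / 2 * u ^ 2| := by
                have h5' := abs_sub (|1 + u| ^ p) (1:ℝ)
                simp only [abs_one] at h5' ⊢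
                linarith
      _ = |1 + u| ^ p + 1 + p * a + p * (p - 1) / 2 * a ^ 2 := by
          rw [h1, h2, h3, abs_one]
  -- combine
  have hone : (1:ℝ) ≤ 8 * a ^ 3 := by
    nlinarith [mul_nonneg (by linarith : (0:ℝ) ≤ 2*a - 1)
      (by positivity : (0:ℝ) ≤ 4*a^2 + 2*a + 1)]
  have hlin : p * a ≤ p * (8 * a ^ 3) :=
    mul_le_mul_of_nonneg_left hkey (by linarith)
  have hsq : p * (p - 1) / 2 * a ^ 2 ≤ p * (p - 1) / 2 * (2 * a ^ 3) := by
    have : a ^ 2 ≤ 2 * a ^ 3 := by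
      nlinarith [mul_nonneg (by linarith : (0:ℝ) ≤ 2*a - 1) (sq_nonneg a)]
    exact mul_le_mul_of_nonneg_left this (by nlinarith)
  have h3p : (0:ℝ) ≤ 3 ^ p := Real.rpow_nonneg (by norm_num) _
  have hfin : |Rem p u| ≤ (3 ^ p * 8 + 8 + 8 * p + p * (p - 1)) * (a ^ 3)
      + 3 ^ p * a ^ (max p 3) := by
    have := mul_le_mul_of_nonneg_left hap h3p
    nlinarith [habs, h1pow]
  have hmax1 : (1:ℝ) ≤ 3 ^ p * 8 + 8 + 8 * p + p * (p - 1) := by nlinarith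
  have h3le : 3 ^ p ≤ 3 ^ p * 8 + 8 + 8 * p + p * (p - 1) := by nlinarith
  calc |Rem p u| ≤ (3 ^ p * 8 + 8 + 8 * p + p * (p - 1)) * (a ^ 3)
      + 3 ^ p * a ^ (max p 3) := hfin
    _ ≤ (3 ^ p * 8 + 8 + 8 * p + p * (p - 1)) * (a ^ 3)
      + (3 ^ p * 8 + 8 + 8 * p + p * (p - 1)) * a ^ (max p 3) :=
        by nlinarith [hsum0]
    _ = (3 ^ p * 8 + 8 + 8 * p + p * (p - 1)) * (a ^ 3 + a ^ (max p 3)) := by ring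
    _ = (3 ^ p * 8 + 8 + 8 * p + p * (p - 1)) * (|u| ^ (3:ℝ) + |u| ^ (max p 3)) := by
        rw [hcube]

lemma rem_bound (p : ℝ) (hp : 1 ≤ p) :
    ∃ C : ℝ, 0 ≤ C ∧ ∀ u : ℝ,
      |Rem p u| ≤ C * (|u| ^ (3:ℝ) + |u| ^ (max p 3)) := by
  set C₁ : ℝ := p * (p - 1) * (|p - 2| * (2:ℝ) ^ |p - 3|) with hC₁
  set C₂ : ℝ := (3:ℝ) ^ p * 8 + 8 + 8 * p + p * (p - 1) with hC₂
  have hC₁0 : 0 ≤ C₁ := by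
    have : (0:ℝ) ≤ p * (p - 1) := by nlinarith
    positivity
  have h3p : (0:ℝ) ≤ 3 ^ p := Real.rpow_nonneg (by norm_num) _
  have hC₂0 : 0 ≤ C₂ := by nlinarith
  refine ⟨max C₁ C₂, le_trans hC₁0 (le_max_left _ _), fun u => ?_⟩
  have hsum0 : (0:ℝ) ≤ |u| ^ (3:ℝ) + |u| ^ (max p 3) := by positivity
  rcases le_or_gt (|u|) (1/2) with h | h
  · have h1 := rem_small p hp h
    have h2 : |u| ^ 2 * |u| = |u| ^ (3:ℝ) := by
      rw [show (3:ℝ) = ((3:ℕ):ℝ) by norm_num, Real.rpow_natCast]; ring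
    rw [h2] at h1
    have h3 : (0:ℝ) ≤ |u| ^ (max p 3) := by positivity
    calc |Rem p u| ≤ C₁ * |u| ^ (3:ℝ) := h1
      _ ≤ max C₁ C₂ * (|u| ^ (3:ℝ) + |u| ^ (max p 3)) := by
          have hle : C₁ ≤ max C₁ C₂ := le_max_left _ _
          have h4 : (0:ℝ) ≤ |u| ^ (3:ℝ) := by positivity
          nlinarith
  · have h1 := rem_large p hp (le_of_lt h)
    calc |Rem p u| ≤ C₂ * (|u| ^ (3:ℝ) + |u| ^ (max p 3)) := h1
      _ ≤ max C₁ C₂ * (|u| ^ (3:ℝ) + |u| ^ (max p 3)) :=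
          mul_le_mul_of_nonneg_right (le_max_right _ _) hsum0

lemma continuous_rem (p s : ℝ) (hp : 1 ≤ p) :
    Continuous (fun x : ℝ => Rem p (s * x)) := by
  have h1 : Continuous (fun x : ℝ => |1 + s * x| ^ p) := by
    have : Continuous (fun x : ℝ => |1 + s * x|) := by continuity
    exact this.rpow_const (fun x => Or.inr (by linarith))
  unfold Rem
  continuity

lemma key_est (p : ℝ) (hp : 1 ≤ p) :
    ∃ C : ℝ, 0 ≤ C ∧ ∀ s : ℝ,
      |(∫ x, |1 + s * x| ^ p ∂(gaussianReal 0 1)) - 1 - p * (p - 1) / 2 * s ^ 2|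
        ≤ C * (|s| ^ (3:ℝ) + |s| ^ (max p 3)) := by
  obtain ⟨C, hC0, hC⟩ := rem_bound p hp
  set m : ℝ := max p 3 with hm
  have hm3 : (3:ℝ) ≤ m := le_max_right p 3
  set γ := gaussianReal 0 1 with hγ
  have hint3 : Integrable (fun x : ℝ => |x| ^ (3:ℝ)) γ :=
    my_integrable_abs_rpow_gauss (by norm_num)
  have hintm : Integrable (fun x : ℝ => |x| ^ m) γ :=
    my_integrable_abs_rpow_gauss (by linarith)
  set M₃ : ℝ := ∫ x, |x| ^ (3:ℝ) ∂γ with hM₃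
  set Mm : ℝ := ∫ x, |x| ^ m ∂γ with hMm
  have hM₃0 : 0 ≤ M₃ := integral_nonneg (fun x => by positivity)
  have hMm0 : 0 ≤ Mm := integral_nonneg (fun x => by positivity)
  refine ⟨C * (M₃ + Mm + 1), by positivity, fun s => ?_⟩
  -- pointwise domination of Rem p (s x)
  have hdom : ∀ x : ℝ, |Rem p (s * x)|
      ≤ C * (|s| ^ (3:ℝ) * |x| ^ (3:ℝ) + |s| ^ m * |x| ^ m) := by
    intro x
    have h1 := hC (s * x)
    have h2 : |s * x| ^ (3:ℝ) = |s| ^ (3:ℝ) * |x| ^ (3:ℝ) := by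
      rw [abs_mul, Real.mul_rpow (abs_nonneg _) (abs_nonneg _)]
    have h3 : |s * x| ^ m = |s| ^ m * |x| ^ m := by
      rw [abs_mul, Real.mul_rpow (abs_nonneg _) (abs_nonneg _)]
    rw [h2, h3] at h1
    exact h1
  -- integrability of the dominating function
  have hdomint : Integrable
      (fun x : ℝ => C * (|s| ^ (3:ℝ) * |x| ^ (3:ℝ) + |s| ^ m * |x| ^ m)) γ :=
    (((hint3.const_mul (|s| ^ (3:ℝ))).add (hintm.const_mul (|s| ^ m))).const_mul C)
  have hRint : Integrable (fun x : ℝ => Rem p (s * x)) γ := by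
    refine hdomint.mono' (continuous_rem p s hp).aestronglyMeasurable
      (ae_of_all _ fun x => ?_)
    rw [Real.norm_eq_abs]
    exact hdom x
  -- decomposition of the integral
  have hpt : ∀ x : ℝ, |1 + s * x| ^ p
      = Rem p (s * x) + (1 + p * (s * x) + p * (p - 1) / 2 * (s * x) ^ 2) := by
    intro x; unfold Rem; ring
  have hpoly : Integrable
      (fun x : ℝ => 1 + p * (s * x) + p * (p - 1) / 2 * (s * x) ^ 2) γ := by
    have h1 : Integrable (fun x : ℝ => p * (s * x)) γ := by
      have := my_integrable_id_gauss.const_mul (p * s)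
      refine this.congr (ae_of_all _ fun x => by ring)
    have h2 : Integrable (fun x : ℝ => p * (p - 1) / 2 * (s * x) ^ 2) γ := by
      have := my_integrable_sq_gauss.const_mul (p * (p - 1) / 2 * s ^ 2)
      refine this.congr (ae_of_all _ fun x => by ring)
    exact ((integrable_const 1).add h1).add h2
  have hsplit : ∫ x, |1 + s * x| ^ p ∂γ
      = (∫ x, Rem p (s * x) ∂γ)
        + ∫ x, (1 + p * (s * x) + p * (p - 1) / 2 * (s * x) ^ 2) ∂γ := by
    rw [← integral_add hRint hpoly]
    exact integral_congr_ae (ae_of_all _ fun x => hpt x)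
  have hpolyval : ∫ x, (1 + p * (s * x) + p * (p - 1) / 2 * (s * x) ^ 2) ∂γ
      = 1 + p * (p - 1) / 2 * s ^ 2 := by
    have h1' : Integrable (fun x : ℝ => (p * s) * x) γ :=
      my_integrable_id_gauss.const_mul _
    have h2' : Integrable (fun x : ℝ => (p * (p - 1) / 2 * s ^ 2) * x ^ 2) γ :=
      my_integrable_sq_gauss.const_mul _
    have heq : (fun x : ℝ => 1 + p * (s * x) + p * (p - 1) / 2 * (s * x) ^ 2)
        = fun x : ℝ => 1 + ((p * s) * x + (p * (p - 1) / 2 * s ^ 2) * x ^ 2) :=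
      funext fun x => by ring
    have hsum : Integrable (fun x : ℝ => p * s * x + p * (p - 1) / 2 * s ^ 2 * x ^ 2) γ :=
      h1'.add h2'
    rw [heq, integral_add (integrable_const 1) hsum, integral_add h1' h2',
      integral_const_mul, integral_const_mul, my_integral_id_gauss, my_integral_sq_gauss]
    have e1 : ∫ _x, (1:ℝ) ∂γ = 1 := by simp [hγ]
    rw [e1]; ring
  have hmain : (∫ x, |1 + s * x| ^ p ∂γ) - 1 - p * (p - 1) / 2 * s ^ 2
      = ∫ x, Rem p (s * x) ∂γ := by
    rw [hsplit, hpolyval]; ring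
  rw [hmain]
  calc |∫ x, Rem p (s * x) ∂γ| ≤ ∫ x, |Rem p (s * x)| ∂γ := by
        simpa [Real.norm_eq_abs] using
          norm_integral_le_integral_norm (μ := γ) (fun x => Rem p (s * x))
    _ ≤ ∫ x, C * (|s| ^ (3:ℝ) * |x| ^ (3:ℝ) + |s| ^ m * |x| ^ m) ∂γ := by
        refine integral_mono hRint.abs hdomint (fun x => hdom x)
    _ = C * (|s| ^ (3:ℝ) * M₃ + |s| ^ m * Mm) := by
        rw [integral_const_mul, integral_add (hint3.const_mul _) (hintm.const_mul _),
          integral_const_mul, integral_const_mul]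
    _ ≤ C * (M₃ + Mm + 1) * (|s| ^ (3:ℝ) + |s| ^ m) := by
        have hs3 : (0:ℝ) ≤ |s| ^ (3:ℝ) := by positivity
        have hsm : (0:ℝ) ≤ |s| ^ m := by positivity
        nlinarith [mul_nonneg hC0 (mul_nonneg hM₃0 hsm), mul_nonneg hC0 (mul_nonneg hMm0 hs3),
          mul_nonneg hC0 hs3, mul_nonneg hC0 hsm]

/-- First-order expansion of the one-step `p`-th moment amplification factor of
the implicit Euler–Maruyama scheme: with `a(τ) = 1/(1 + τ (λ - β₀))` and
`γ = N(0, 1)`,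
`a(τ)^p ∫ |1 + β₁ √τ x|^p dγ(x)
  = 1 - (p (λ - β₀) - (p (p-1)/2) β₁²) τ + o(τ)` as `τ → 0⁺`. -/
theorem one_step_amplification_factor_expansion
    (p : ℝ) (hp : 1 ≤ p) (β₀ β₁ lam : ℝ) (hdrift : β₀ < lam) :
    (fun τ : ℝ =>
        (1 / (1 + τ * (lam - β₀))) ^ p *
            (∫ x, |1 + β₁ * Real.sqrt τ * x| ^ p ∂(gaussianReal 0 1)) -
          (1 - (p * (lam - β₀) - p * (p - 1) / 2 * β₁ ^ 2) * τ))
      =o[nhdsWithin 0 (Set.Ioi 0)] (fun τ : ℝ => τ) := by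
  have hc₀pos : 0 < lam - β₀ := by linarith
  set l : Filter ℝ := nhdsWithin 0 (Set.Ioi 0) with hl
  have hIoo : ∀ δ : ℝ, 0 < δ → ∀ᶠ τ in l, τ ∈ Set.Ioo (0:ℝ) δ := fun δ hδ =>
    eventually_of_mem (Ioo_mem_nhdsGT hδ) (fun x h => h)
  -- expansion of the deterministic factor
  have hAlittle : (fun τ : ℝ => (1 / (1 + τ * (lam - β₀))) ^ p
      - (1 - p * (lam - β₀) * τ)) =o[l] (fun τ : ℝ => τ) := by
    have hinner : HasDerivAt (fun τ : ℝ => 1 + τ * (lam - β₀)) (lam - β₀) 0 := by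
      simpa using ((hasDerivAt_id (0:ℝ)).mul_const (lam - β₀)).const_add 1
    have h10 : (1:ℝ) + 0 * (lam - β₀) = 1 := by ring
    have houter : HasDerivAt (fun y : ℝ => y ^ (-p)) (-p)
        ((1:ℝ) + 0 * (lam - β₀)) := by
      rw [h10]
      have := Real.hasDerivAt_rpow_const (x := (1:ℝ)) (p := -p) (Or.inl one_ne_zero)
      simpa using this
    have hg : HasDerivAt (fun τ : ℝ => (1 + τ * (lam - β₀)) ^ (-p))
        (-p * (lam - β₀)) 0 := by
      have := houter.comp 0 hinner
      simpa [Function.comp_def] using this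
    have h1 := hasDerivAt_iff_isLittleO.mp hg
    have h2 := h1.mono (nhdsWithin_le_nhds : l ≤ nhds 0)
    refine h2.congr' ?_ ?_
    · filter_upwards [self_mem_nhdsWithin] with τ (hτ : τ ∈ Set.Ioi (0:ℝ))
      have hτ0 : (0:ℝ) < τ := hτ
      have hpos : (0:ℝ) < 1 + τ * (lam - β₀) := by nlinarith
      have hrw : (1 / (1 + τ * (lam - β₀))) ^ p = (1 + τ * (lam - β₀)) ^ (-p) := by
        rw [one_div, Real.inv_rpow hpos.le, ← Real.rpow_neg hpos.le]
      simp only [h10, Real.one_rpow, smul_eq_mul, sub_zero, hrw]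
      ring
    · filter_upwards with τ
      simp
  -- expansion of the Gaussian integral factor
  obtain ⟨C, hC0, hCest⟩ := key_est p hp
  have hBlittle : (fun τ : ℝ =>
      (∫ x, |1 + β₁ * Real.sqrt τ * x| ^ p ∂(gaussianReal 0 1))
        - (1 + p * (p - 1) / 2 * β₁ ^ 2 * τ)) =o[l] (fun τ : ℝ => τ) := by
    set D : ℝ := C * (|β₁| ^ (3:ℝ) + |β₁| ^ (max p 3)) with hD
    have hD0 : 0 ≤ D := by positivity
    rw [isLittleO_iff]
    intro ε hε
    have hδpos : 0 < min 1 ((ε / (D + 1)) ^ 2) := by positivity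
    filter_upwards [hIoo _ hδpos] with τ hτ
    obtain ⟨hτ0, hτδ⟩ := hτ
    set t := Real.sqrt τ with ht
    have ht0 : 0 < t := Real.sqrt_pos.mpr hτ0
    have ht1 : t ≤ 1 := by
      have h1 : τ ≤ 1 := le_of_lt (lt_of_lt_of_le hτδ (min_le_left _ _))
      calc t ≤ Real.sqrt 1 := Real.sqrt_le_sqrt h1
        _ = 1 := Real.sqrt_one
    have htsq : t ^ 2 = τ := Real.sq_sqrt hτ0.le
    have hs := hCest (β₁ * t)
    have habs : |β₁ * t| = |β₁| * t := by rw [abs_mul, abs_of_nonneg ht0.le]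
    have h3 : |β₁ * t| ^ (3:ℝ) = |β₁| ^ (3:ℝ) * t ^ (3:ℝ) := by
      rw [habs, Real.mul_rpow (abs_nonneg _) ht0.le]
    have hm' : |β₁ * t| ^ (max p 3) = |β₁| ^ (max p 3) * t ^ (max p 3) := by
      rw [habs, Real.mul_rpow (abs_nonneg _) ht0.le]
    have htm : t ^ (max p 3) ≤ t ^ (3:ℝ) :=
      Real.rpow_le_rpow_of_exponent_ge ht0 ht1 (le_max_right p 3)
    have ht3 : t ^ (3:ℝ) = τ * t := by
      rw [show (3:ℝ) = ((3:ℕ):ℝ) by norm_num, Real.rpow_natCast]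
      calc t ^ 3 = t ^ 2 * t := by ring
        _ = τ * t := by rw [htsq]
    have hsq2 : (β₁ * t) ^ 2 = β₁ ^ 2 * τ := by rw [mul_pow, htsq]
    have heqlhs : (∫ x, |1 + β₁ * t * x| ^ p ∂(gaussianReal 0 1))
        - (1 + p * (p - 1) / 2 * β₁ ^ 2 * τ)
        = (∫ x, |1 + β₁ * t * x| ^ p ∂(gaussianReal 0 1)) - 1
          - p * (p - 1) / 2 * (β₁ * t) ^ 2 := by
      rw [hsq2]; ring
    have hbound : |(∫ x, |1 + β₁ * t * x| ^ p ∂(gaussianReal 0 1))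
        - (1 + p * (p - 1) / 2 * β₁ ^ 2 * τ)| ≤ D * (τ * t) := by
      rw [heqlhs]
      calc |(∫ x, |1 + β₁ * t * x| ^ p ∂(gaussianReal 0 1)) - 1
          - p * (p - 1) / 2 * (β₁ * t) ^ 2|
          ≤ C * (|β₁ * t| ^ (3:ℝ) + |β₁ * t| ^ (max p 3)) := hs
        _ = C * (|β₁| ^ (3:ℝ) * t ^ (3:ℝ) + |β₁| ^ (max p 3) * t ^ (max p 3)) := by
            rw [h3, hm']
        _ ≤ C * (|β₁| ^ (3:ℝ) * t ^ (3:ℝ) + |β₁| ^ (max p 3) * t ^ (3:ℝ)) := by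
            refine mul_le_mul_of_nonneg_left ?_ hC0
            have := mul_le_mul_of_nonneg_left htm
              (Real.rpow_nonneg (abs_nonneg β₁) (max p 3))
            linarith
        _ = D * t ^ (3:ℝ) := by rw [hD]; ring
        _ = D * (τ * t) := by rw [ht3]
    have htle : t ≤ ε / (D + 1) := by
      have h1 : τ ≤ (ε / (D + 1)) ^ 2 := le_of_lt (lt_of_lt_of_le hτδ (min_le_right _ _))
      calc t ≤ Real.sqrt ((ε / (D + 1)) ^ 2) := Real.sqrt_le_sqrt h1
        _ = ε / (D + 1) := Real.sqrt_sq (by positivity)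
    have hfrac : D / (D + 1) ≤ 1 := by
      rw [div_le_one (by positivity)]; linarith
    rw [Real.norm_eq_abs, Real.norm_eq_abs, abs_of_pos hτ0]
    calc |(∫ x, |1 + β₁ * Real.sqrt τ * x| ^ p ∂(gaussianReal 0 1))
        - (1 + p * (p - 1) / 2 * β₁ ^ 2 * τ)| ≤ D * (τ * t) := hbound
      _ ≤ D * (τ * (ε / (D + 1))) := by
          refine mul_le_mul_of_nonneg_left ?_ hD0
          exact mul_le_mul_of_nonneg_left htle hτ0.le
      _ = (ε * τ) * (D / (D + 1)) := by ring
      _ ≤ (ε * τ) * 1 := by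
          refine mul_le_mul_of_nonneg_left hfrac ?_
          positivity
      _ = ε * τ := by ring
  -- boundedness facts
  have hτO : (fun τ : ℝ => τ) =O[l] (fun _ : ℝ => (1:ℝ)) := by
    rw [isBigO_iff]
    refine ⟨1, ?_⟩
    filter_upwards [hIoo 1 one_pos] with τ hτ
    rw [Real.norm_eq_abs, abs_of_pos hτ.1]
    simpa using le_of_lt hτ.2
  have hBO : (fun τ : ℝ =>
      ∫ x, |1 + β₁ * Real.sqrt τ * x| ^ p ∂(gaussianReal 0 1)) =O[l]
      (fun _ : ℝ => (1:ℝ)) := by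
    have h1 : (fun τ : ℝ =>
        (∫ x, |1 + β₁ * Real.sqrt τ * x| ^ p ∂(gaussianReal 0 1))
          - (1 + p * (p - 1) / 2 * β₁ ^ 2 * τ)) =O[l] (fun _ : ℝ => (1:ℝ)) :=
      (hBlittle.trans_isBigO hτO).isBigO
    have h2 : (fun τ : ℝ => 1 + p * (p - 1) / 2 * β₁ ^ 2 * τ) =O[l]
        (fun _ : ℝ => (1:ℝ)) := by
      rw [isBigO_iff]
      refine ⟨1 + |p * (p - 1) / 2 * β₁ ^ 2|, ?_⟩
      filter_upwards [hIoo 1 one_pos] with τ hτ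
      rw [Real.norm_eq_abs, norm_one, mul_one]
      calc |1 + p * (p - 1) / 2 * β₁ ^ 2 * τ|
          ≤ |(1:ℝ)| + |p * (p - 1) / 2 * β₁ ^ 2 * τ| := abs_add_le _ _
        _ = 1 + |p * (p - 1) / 2 * β₁ ^ 2| * |τ| := by rw [abs_one, abs_mul]
        _ ≤ 1 + |p * (p - 1) / 2 * β₁ ^ 2| * 1 := by
            have h3 : |τ| ≤ 1 := by rw [abs_of_pos hτ.1]; exact le_of_lt hτ.2
            nlinarith [abs_nonneg (p * (p - 1) / 2 * β₁ ^ 2)]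
        _ = 1 + |p * (p - 1) / 2 * β₁ ^ 2| := by ring
    have := h1.add h2
    refine this.congr (fun τ => by ring) (fun τ => rfl)
  have hlinO : (fun τ : ℝ => 1 - p * (lam - β₀) * τ) =O[l] (fun _ : ℝ => (1:ℝ)) := by
    rw [isBigO_iff]
    refine ⟨1 + |p * (lam - β₀)|, ?_⟩
    filter_upwards [hIoo 1 one_pos] with τ hτ
    rw [Real.norm_eq_abs, norm_one, mul_one]
    calc |1 - p * (lam - β₀) * τ|
        ≤ |(1:ℝ)| + |p * (lam - β₀) * τ| := abs_sub _ _
      _ = 1 + |p * (lam - β₀)| * |τ| := by rw [abs_one, abs_mul]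
      _ ≤ 1 + |p * (lam - β₀)| := by
          have h3 : |τ| ≤ 1 := by rw [abs_of_pos hτ.1]; exact le_of_lt hτ.2
          nlinarith [abs_nonneg (p * (lam - β₀))]
  -- quadratic term
  have hττ : (fun τ : ℝ => τ ^ 2) =o[l] (fun τ : ℝ => τ) := by
    rw [isLittleO_iff]
    intro ε hε
    filter_upwards [hIoo ε hε] with τ hτ
    rw [Real.norm_eq_abs, Real.norm_eq_abs, abs_of_pos hτ.1]
    rw [abs_of_nonneg (sq_nonneg τ)]
    nlinarith [hτ.1, hτ.2]
  -- combine
  have h1 : (fun τ : ℝ =>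
      ((1 / (1 + τ * (lam - β₀))) ^ p - (1 - p * (lam - β₀) * τ))
        * ∫ x, |1 + β₁ * Real.sqrt τ * x| ^ p ∂(gaussianReal 0 1)) =o[l]
      (fun τ : ℝ => τ) := by
    have := hAlittle.mul_isBigO hBO
    simpa using this
  have h2 : (fun τ : ℝ => (1 - p * (lam - β₀) * τ)
      * ((∫ x, |1 + β₁ * Real.sqrt τ * x| ^ p ∂(gaussianReal 0 1))
          - (1 + p * (p - 1) / 2 * β₁ ^ 2 * τ))) =o[l] (fun τ : ℝ => τ) := by
    have := hlinO.mul_isLittleO hBlittle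
    simpa using this
  have h3 : (fun τ : ℝ => (1 - p * (lam - β₀) * τ) * (1 + p * (p - 1) / 2 * β₁ ^ 2 * τ)
      - (1 - (p * (lam - β₀) - p * (p - 1) / 2 * β₁ ^ 2) * τ)) =o[l]
      (fun τ : ℝ => τ) := by
    have := hττ.const_mul_left (-(p * (lam - β₀) * (p * (p - 1) / 2 * β₁ ^ 2)))
    refine this.congr' (Filter.Eventually.of_forall fun τ => by ring) (Filter.EventuallyEq.refl _ _)
  have hsum := (h1.add h2).add h3
  refine hsum.congr' (Filter.Eventually.of_forall fun τ => by ring) (Filter.EventuallyEq.refl _ _)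
end
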